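/- arXiv:1307.0322 — 3 statements merged into one kernel-verified Lean document; each statement's English description precedes it below -/
import Mathlib

section
/- Let G be a topological group acting continuously on topological spaces E and B, and let p : E → B be a continuous G-equivariant map. Assume that for every x ∈ B there is an open neighborhood V of x and a continuous map s : V → G with s(v)·x = v for all v ∈ V. Then p is a locally trivial fibration: every point of B has an open neighborhood over which p is homeomorphic to a product projection. -/
open ContinuousMap Topology unitInterval

universe u

namespace Paper

variable {X : Type*} {Y : Type*} [TopologicalSpace X] [TopologicalSpace Y]

/-- The map induced by a continuous map on path components. -/
def pi0Map (f : C(X, Y)) : ZerothHomotopy X → ZerothHomotopy Y :=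
  Quotient.map (sa := pathSetoid X) (sb := pathSetoid Y) f
    (fun _ _ h => h.elim fun p => ⟨p.map f.continuous⟩)

/-- The map induced by a continuous map on generalized loops. -/
def genLoopMap (f : C(X, Y)) {N : Type*} {x : X} (p : GenLoop N X x) :
    GenLoop N Y (f x) :=
  ⟨f.comp p.1, fun y hy => by simp [p.2 y hy]⟩

theorem genLoopMap_homotopic (f : C(X, Y)) {N : Type*} {x : X} {p q : GenLoop N X x}
    (h : GenLoop.Homotopic p q) :
    GenLoop.Homotopic (genLoopMap f p) (genLoopMap f q) :=
  h.elim fun H => ⟨H.compContinuousMap f⟩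

/-- The map induced by a continuous map on homotopy groups. -/
def piMap (N : Type*) (f : C(X, Y)) (x : X) :
    HomotopyGroup N X x → HomotopyGroup N Y (f x) :=
  Quotient.map (genLoopMap f) fun _ _ h => genLoopMap_homotopic f h

/-- A map is a weak homotopy equivalence if it induces a bijection on path components and
on all homotopy groups at all basepoints. -/
def IsWeakHomotopyEquiv (f : X → Y) : Prop :=
  ∃ hf : Continuous f,
    Function.Bijective (pi0Map ⟨f, hf⟩) ∧
      ∀ (n : ℕ) (x : X), Function.Bijective (piMap (Fin n) ⟨f, hf⟩ x)

/-- A map is a Hurewicz fibration if it has the homotopy lifting property with respect to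
all topological spaces. -/
def IsHurewiczFibration {E B : Type*} [TopologicalSpace E] [TopologicalSpace B]
    (p : E → B) : Prop :=
  ∀ (A : Type u) [TopologicalSpace A], ∀ (H : C(A × I, B)) (g : C(A, E)),
    (∀ a, p (g a) = H (a, 0)) →
    ∃ G : C(A × I, E), (∀ a, G (a, 0) = g a) ∧ ∀ z, p (G z) = H z

open CategoryTheory Limits in
/-- A functor preserves reflexive coequalizers. -/
def PreservesReflexiveCoequalizers {A B : Type*} [Category A] [Category B] (F : A ⥤ B) : Prop :=
  ∀ {X Y : A} (f g : X ⟶ Y), IsReflexivePair f g →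
    ∀ c : Cofork f g, Nonempty (IsColimit c) → Nonempty (IsColimit (F.mapCocone c))

end Paper

open Paper

/-- Cerf's criterion: if `p : E → B` is a `G`-equivariant map and every orbit map
`G → B`, `g ↦ g • x`, admits a continuous local section near every point, then `p` is a
locally trivial fibration: every point of `B` has an open neighborhood over which `p` is
homeomorphic to a product projection. -/
theorem locallyTrivial_of_local_sections
    {G E B : Type u} [Group G] [TopologicalSpace G] [IsTopologicalGroup G]
    [TopologicalSpace E] [TopologicalSpace B]
    [MulAction G E] [ContinuousSMul G E] [MulAction G B] [ContinuousSMul G B]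
    (p : C(E, B)) (hequiv : ∀ (g : G) (e : E), p (g • e) = g • p e)
    (hsec : ∀ x : B, ∃ V : Set B, IsOpen V ∧ x ∈ V ∧
      ∃ s : C(V, G), ∀ v : V, s v • x = (v : B)) :
    ∀ x : B, ∃ U : Set B, IsOpen U ∧ x ∈ U ∧
      ∃ e : {y : E // p y ∈ U} ≃ₜ U × {y : E // p y = x},
        ∀ y : {y : E // p y ∈ U}, ((e y).1 : B) = p y.1 := by
  intro x
  obtain ⟨V, hV, hxV, s, hs⟩ := hsec x
  refine ⟨V, hV, hxV, ?_⟩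
  have key : ∀ y : {y : E // p y ∈ V}, p ((s ⟨p y.1, y.2⟩)⁻¹ • y.1) = x := by
    intro y
    rw [hequiv, inv_smul_eq_iff, hs ⟨p y.1, y.2⟩]
  have hback : ∀ z : V × {y : E // p y = x}, p ((s z.1) • z.2.1) = (z.1 : B) := by
    intro z
    rw [hequiv, z.2.2, hs]
  have c1 : Continuous fun y : {y : E // p y ∈ V} => (⟨p y.1, y.2⟩ : V) :=
    (p.continuous.comp continuous_subtype_val).subtype_mk _
  refine ⟨⟨⟨fun y => (⟨p y.1, y.2⟩, ⟨(s ⟨p y.1, y.2⟩)⁻¹ • y.1, key y⟩),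
    fun z => ⟨(s z.1) • z.2.1, by rw [hback]; exact z.1.2⟩, ?_, ?_⟩, ?_, ?_⟩, fun y => rfl⟩
  · intro y
    refine Subtype.ext ?_
    exact smul_inv_smul _ _
  · rintro ⟨v, f⟩
    have hp : p ((s v) • f.1) = (v : B) := hback (v, f)
    refine Prod.ext (Subtype.ext hp) (Subtype.ext ?_)
    show (s ⟨p ((s v) • f.1), _⟩)⁻¹ • ((s v) • f.1) = f.1
    rw [show (⟨p ((s v) • f.1), hback (v, f) ▸ v.2⟩ : V) = v from Subtype.ext hp,
      inv_smul_smul]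
  · exact c1.prodMk
      ((((s.continuous.comp c1).inv).smul continuous_subtype_val).subtype_mk _)
  · exact (((s.continuous.comp continuous_fst).smul
      (continuous_subtype_val.comp continuous_snd)).subtype_mk _)
end

section
/- Every locally trivial fibration over a paracompact base is a Hurewicz fibration, i.e. it has the homotopy lifting property with respect to all topological spaces. -/
open ContinuousMap Topology unitInterval

universe u

open Paper


open ContinuousMap Topology unitInterval Set Filter



noncomputable section
namespace HPF

variable {E B : Type u} [TopologicalSpace E] [TopologicalSpace B]

/-- projection ℝ → I -/
def prj : ℝ → I := Set.projIcc (0:ℝ) 1 zero_le_one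

lemma prj_zero : prj (0:ℝ) = 0 := by simp [prj]

lemma prj_of_mem {t : ℝ} (h0 : 0 ≤ t) (h1 : t ≤ 1) : (prj t : ℝ) = t := by
  rw [prj, Set.projIcc_of_mem zero_le_one ⟨h0, h1⟩]

@[fun_prop, continuity]
lemma continuous_prj : Continuous prj := continuous_projIcc

@[fun_prop]
lemma continuous_evalI : Continuous (fun q : C(I,B) × I => q.1 q.2) :=
  ContinuousEval.continuous_eval

/-- evaluation of a path at a real time -/
@[fun_prop]
lemma continuous_evalr : Continuous (fun q : C(I,B) × ℝ => q.1 (prj q.2)) := by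
  exact (ContinuousEval.continuous_eval (X := I)).comp
    (continuous_fst.prodMk (continuous_prj.comp continuous_snd))

@[fun_prop]
lemma continuous_evalr_const {t : ℝ} : Continuous (fun ω : C(I,B) => ω (prj t)) := by
  exact continuous_evalr.comp (continuous_id.prodMk continuous_const)

/-- min of `f ∘ ω ∘ prj` over `[a,b]`. -/
def minOn (f : C(B, ℝ)) (a b : ℝ) (ω : C(I, B)) : ℝ :=
  sInf ((fun t : ℝ => f (ω (prj t))) '' Icc a b)

variable {f : C(B,ℝ)} {a b : ℝ}

lemma minOn_mem (hab : a ≤ b) (ω : C(I,B)) :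
    ∃ t ∈ Icc a b, minOn f a b ω = f (ω (prj t)) ∧ ∀ s ∈ Icc a b, f (ω (prj t)) ≤ f (ω (prj s)) := by
  obtain ⟨t, ht, hmin⟩ := (isCompact_Icc (a := a) (b := b)).exists_isMinOn ⟨a, le_refl a, hab⟩
    (f := fun t : ℝ => f (ω (prj t))) (Continuous.continuousOn (by fun_prop))
  refine ⟨t, ht, ?_, fun s hs => hmin hs⟩
  exact IsLeast.csInf_eq ⟨⟨t, ht, rfl⟩, fun y ⟨s, hs, hy⟩ => hy ▸ hmin hs⟩

lemma minOn_le (hab : a ≤ b) (ω : C(I,B)) {t : ℝ} (ht : t ∈ Icc a b) :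
    minOn f a b ω ≤ f (ω (prj t)) :=
  csInf_le ((isCompact_Icc.image (by fun_prop : Continuous fun t : ℝ => f (ω (prj t)))).bddBelow)
    ⟨t, ht, rfl⟩

lemma minOn_pos (hab : a ≤ b) (ω : C(I,B)) (h : ∀ t ∈ Icc a b, 0 < f (ω (prj t))) :
    0 < minOn f a b ω := by
  obtain ⟨t, ht, heq, -⟩ := minOn_mem (f := f) hab ω
  rw [heq]; exact h t ht

lemma minOn_nonneg (h : ∀ x, 0 ≤ f x) (ω : C(I,B)) : 0 ≤ minOn f a b ω :=
  Real.sInf_nonneg (fun x ⟨t, _, hy⟩ => hy ▸ h _)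

lemma pos_of_minOn_pos (hab : a ≤ b) (ω : C(I,B)) (h : 0 < minOn f a b ω)
    {t : ℝ} (ht : t ∈ Icc a b) : 0 < f (ω (prj t)) :=
  lt_of_lt_of_le h (minOn_le hab ω ht)

lemma minOn_le_one (hab : a ≤ b) (h1 : ∀ x, f x ≤ 1) (ω : C(I,B)) : minOn f a b ω ≤ 1 :=
  le_trans (minOn_le hab ω ⟨le_refl a, hab⟩) (h1 _)

lemma continuous_minOn (hab : a ≤ b) : Continuous (minOn f a b) := by
  rw [continuous_iff_continuousAt]
  intro ω₀
  rw [ContinuousAt, tendsto_order]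
  constructor
  · intro x hx
    have hO : IsOpen {q : C(I,B) × ℝ | x < f (q.1 (prj q.2))} :=
      isOpen_lt continuous_const (by fun_prop)
    have hsub : {ω₀} ×ˢ Icc a b ⊆ {q : C(I,B) × ℝ | x < f (q.1 (prj q.2))} := by
      rintro ⟨ω, t⟩ ⟨hω, ht⟩
      simp only [mem_singleton_iff] at hω; subst hω
      exact lt_of_lt_of_le hx (minOn_le hab _ ht)
    obtain ⟨U, V, hU, hV, hωU, hIV, hUV⟩ := generalized_tube_lemma isCompact_singleton
      isCompact_Icc hO hsub
    have hmem := hωU (Set.mem_singleton _)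
    filter_upwards [hU.mem_nhds hmem] with ω hω
    obtain ⟨t, ht, heq, -⟩ := minOn_mem (f := f) hab ω
    rw [heq]
    exact hUV (Set.mk_mem_prod hω (hIV ht))
  · intro x hx
    obtain ⟨t, ht, heq, -⟩ := minOn_mem (f := f) hab ω₀
    have hc : Continuous fun ω : C(I,B) => f (ω (prj t)) := by fun_prop
    filter_upwards [(hc.tendsto ω₀).eventually_lt_const (heq ▸ hx)] with ω hω
    exact lt_of_le_of_lt (minOn_le hab ω ht) hω

/-- continuous family of reparametrizations: `rp ω a b` is `ω` restricted to `[a,b]`,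
rescaled to `I` (via clamping). -/
def rpCM : C(C(I,B) × ℝ × ℝ, C(I, B)) :=
  ContinuousMap.curry ⟨fun q => q.1.1 (prj (q.1.2.1 + q.2 * (q.1.2.2 - q.1.2.1))), by
    exact continuous_evalr.comp <| (continuous_fst.comp continuous_fst).prodMk <| by fun_prop⟩

def rp (ω : C(I,B)) (a b : ℝ) : C(I, B) := rpCM (ω, a, b)

lemma rp_apply (ω : C(I,B)) (a b : ℝ) (t : I) :
    rp ω a b t = ω (prj (a + t * (b - a))) := rfl

@[fun_prop]
lemma continuous_rp : Continuous fun q : C(I,B) × ℝ × ℝ => rp q.1 q.2.1 q.2.2 :=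
  rpCM.continuous

lemma rp_zero (ω : C(I,B)) (a b : ℝ) : rp ω a b 0 = ω (prj a) := by
  simp [rp_apply]

lemma rp_self (ω : C(I,B)) (a : ℝ) : rp ω a a = ContinuousMap.const I (ω (prj a)) := by
  ext t; simp [rp_apply]

lemma rp_mem (ω : C(I,B)) {a b : ℝ} (hab : a ≤ b) (t : I) :
    a + (t:ℝ) * (b - a) ∈ Icc a b := by
  constructor
  · nlinarith [t.2.1, t.2.2]
  · nlinarith [t.2.1, t.2.2]


lemma Continuous.evalCM {X : Type*} [TopologicalSpace X] {g : X → C(I,E)} {h : X → I}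
    (hg : Continuous g) (hh : Continuous h) : Continuous fun x => g x (h x) :=
  (ContinuousEval.continuous_eval (X := I) (Y := E)).comp (hg.prodMk hh)

variable (p : C(E, B))

/-- domain of a local lifting function over `V`. -/
def ldom (V : Set B) : Set (E × C(I,B)) := {z | p z.1 = z.2 0 ∧ ∀ t : I, z.2 t ∈ V}

/-- Local lifting data over a set `V ⊆ B`. -/
structure LiftData (V : Set B) where
  L : E × C(I,B) → C(I,E)
  cont : ContinuousOn L (ldom p V)
  start : ∀ z ∈ ldom p V, L z 0 = z.1
  proj : ∀ z ∈ ldom p V, ∀ t, p (L z t) = z.2 t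
  cst : ∀ y : E, p y ∈ V → L (y, ContinuousMap.const I (p y)) = ContinuousMap.const I y

/-- Local lifting data from a trivialization. -/
def LiftData.ofTriv (V : Set B) (F : Type u) [TopologicalSpace F]
    (e : {y : E // p y ∈ V} ≃ₜ V × F) (he : ∀ y, ((e y).1 : B) = p y.1) :
    LiftData p V := by
  classical
  have hmem1 : ∀ z : E × C(I,B), z ∈ ldom p V → p z.1 ∈ V := by
    intro z hz; rw [hz.1]; exact hz.2 0
  have key : ∀ (z : E × C(I,B)) (h : z ∈ ldom p V) (t : I), z.2 t = p z.1 →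
      (e.symm (⟨z.2 t, h.2 t⟩, (e ⟨z.1, hmem1 z h⟩).2)).1 = z.1 := by
    intro z h t hteq
    have h2 : (⟨z.2 t, h.2 t⟩ : V) = (e ⟨z.1, hmem1 z h⟩).1 := by
      apply Subtype.ext
      rw [he ⟨z.1, hmem1 z h⟩]
      exact hteq
    rw [h2, Prod.mk.eta, Homeomorph.symm_apply_apply]
  refine
    { L := fun z =>
        if h : z ∈ ldom p V then
          ⟨fun t => (e.symm (⟨z.2 t, h.2 t⟩, (e ⟨z.1, hmem1 z h⟩).2)).1, by
            refine continuous_subtype_val.comp (e.symm.continuous.comp ?_)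
            refine Continuous.prodMk ?_ continuous_const
            exact Continuous.subtype_mk (map_continuous z.2) _⟩
        else ContinuousMap.const I z.1
      cont := ?_, start := ?_, proj := ?_, cst := ?_ }
  · -- continuity
    rw [continuousOn_iff_continuous_restrict]
    have hΦc : Continuous fun q : (ldom p V) × I =>
        (e.symm (⟨q.1.1.2 q.2, q.1.2.2 q.2⟩, (e ⟨q.1.1.1, hmem1 q.1.1 q.1.2⟩).2)).1 := by
      refine continuous_subtype_val.comp (e.symm.continuous.comp (Continuous.prodMk ?_ ?_))
      · refine Continuous.subtype_mk ?_ _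
        exact (ContinuousEval.continuous_eval (X := I) (Y := B)).comp
          (((continuous_snd.comp continuous_subtype_val).comp
            continuous_fst).prodMk continuous_snd)
      · refine continuous_snd.comp (e.continuous.comp (Continuous.subtype_mk ?_ _))
        exact (continuous_fst.comp continuous_subtype_val).comp continuous_fst
    set Φ : C((ldom p V) × I, E) := ⟨_, hΦc⟩ with hΦ
    apply Continuous.congr Φ.curry.continuous
    intro z
    ext t
    show Φ (z, t) = _
    rw [Set.restrict_apply, dif_pos z.2]
    rfl
  · intro z hz
    show (if h : z ∈ ldom p V then _ else ContinuousMap.const I z.1) 0 = z.1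
    rw [dif_pos hz]
    exact key z hz 0 hz.1.symm
  · intro z hz t
    show p ((if h : z ∈ ldom p V then _ else ContinuousMap.const I z.1) t) = z.2 t
    rw [dif_pos hz]
    show p ((e.symm (⟨z.2 t, hz.2 t⟩, (e ⟨z.1, hmem1 z hz⟩).2)).1) = z.2 t
    have := he (e.symm (⟨z.2 t, hz.2 t⟩, (e ⟨z.1, hmem1 z hz⟩).2))
    rw [Homeomorph.apply_symm_apply] at this
    exact this.symm
  · intro y hy
    have hz : ((y, ContinuousMap.const I (p y)) : E × C(I,B)) ∈ ldom p V := ⟨rfl, fun _ => hy⟩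
    ext t
    show (if h : _ ∈ ldom p V then _ else ContinuousMap.const I y) t = (ContinuousMap.const I y) t
    rw [dif_pos hz]
    exact key _ hz t rfl

section Step

variable {ι : Type u} (φ : PartitionOfUnity ι B univ) {U : ι → Set B}
  (LD : ∀ i, LiftData p (U i))

/-- one guarded elementary lifting step over the window `[z.2.2.1, z.2.2.2]`. -/
def step (j : ι) (z : E × C(I,B) × ℝ × ℝ) : E :=
  if z.2.2.2 ≤ z.2.2.1 then z.1 else (LD j).L (z.1, rp z.2.1 z.2.2.1 z.2.2.2) 1

/-- the set on which `step j` is well-behaved. -/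
def Gstep (j : ι) : Set (E × C(I,B) × ℝ × ℝ) :=
  {z | 0 ≤ z.2.2.1 ∧ z.2.2.1 ≤ 1 ∧ z.2.2.2 ≤ 1 ∧ p z.1 = z.2.1 (prj z.2.2.1) ∧
       (z.2.2.1 < z.2.2.2 → ∀ t ∈ Icc z.2.2.1 z.2.2.2, z.2.1 (prj t) ∈ tsupport ⇑(φ j))}

variable {p} {φ} {j : ι}

lemma step_guard {z : E × C(I,B) × ℝ × ℝ} (h : z.2.2.2 ≤ z.2.2.1) : step p LD j z = z.1 :=
  if_pos h

lemma ldom_of_mem (hsub : ∀ i, tsupport ⇑(φ i) ⊆ U i) {z : E × C(I,B) × ℝ × ℝ}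
    (hz : z ∈ Gstep p φ j)
    (hlt : z.2.2.1 < z.2.2.2) : (z.1, rp z.2.1 z.2.2.1 z.2.2.2) ∈ ldom p (U j) := by
  obtain ⟨h0, h1, hb1, heq, hcond⟩ := hz
  refine ⟨by rw [rp_zero]; exact heq, fun t => ?_⟩
  exact hsub j (hcond hlt _ (rp_mem z.2.1 hlt.le t))

lemma step_proj (hsub : ∀ i, tsupport ⇑(φ i) ⊆ U i) {z : E × C(I,B) × ℝ × ℝ}
    (hz : z ∈ Gstep p φ j) :
    p (step p LD j z) = z.2.1 (prj (max z.2.2.1 z.2.2.2)) := by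
  by_cases h : z.2.2.2 ≤ z.2.2.1
  · rw [step_guard LD h, max_eq_left h]
    exact hz.2.2.2.1
  · push_neg at h
    rw [max_eq_right h.le]
    have hstep : step p LD j z = (LD j).L (z.1, rp z.2.1 z.2.2.1 z.2.2.2) 1 :=
      if_neg (not_le.mpr h)
    rw [hstep, (LD j).proj _ (ldom_of_mem hsub hz h) 1, rp_apply]
    have harg : z.2.2.1 + ((1:I):ℝ) * (z.2.2.2 - z.2.2.1) = z.2.2.2 := by
      norm_num
    rw [harg]

lemma step_cwa (hsub : ∀ i, tsupport ⇑(φ i) ⊆ U i) {z₀ : E × C(I,B) × ℝ × ℝ}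
    (hz₀ : z₀ ∈ Gstep p φ j) :
    ContinuousWithinAt (step p LD j) (Gstep p φ j) z₀ := by
  classical
  set SB : E × C(I,B) × ℝ × ℝ → E := fun z => (LD j).L (z.1, rp z.2.1 z.2.2.1 z.2.2.2) 1
    with hSB
  set ζ : E × C(I,B) × ℝ × ℝ → E × C(I,B) := fun z => (z.1, rp z.2.1 z.2.2.1 z.2.2.2)
    with hζdef
  have hζ : Continuous ζ := continuous_fst.prodMk (rpCM.continuous.comp continuous_snd)
  have hSBcwa : ∀ S : Set (E × C(I,B) × ℝ × ℝ), MapsTo ζ S (ldom p (U j)) →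
      ζ z₀ ∈ ldom p (U j) → ContinuousWithinAt SB S z₀ := by
    intro S hmap hz₀'
    have h1 : ContinuousWithinAt (fun w : E × C(I,B) => (LD j).L w) (ldom p (U j)) (ζ z₀) :=
      (LD j).cont.continuousWithinAt hz₀'
    have h2 : ContinuousWithinAt (fun z => (LD j).L (ζ z)) S z₀ :=
      h1.comp hζ.continuousWithinAt hmap
    exact ((ContinuousEvalConst.continuous_eval_const (1 : I)).continuousAt).comp_continuousWithinAt h2
  obtain hlt | heq | hgt := lt_trichotomy z₀.2.2.1 z₀.2.2.2
  · -- α₀ < β₀ : locally the non-guarded branch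
    have hopen : IsOpen {z : E × C(I,B) × ℝ × ℝ | z.2.2.1 < z.2.2.2} :=
      isOpen_lt (by fun_prop) (by fun_prop)
    rw [← continuousWithinAt_inter (hopen.mem_nhds hlt)]
    have hcwa : ContinuousWithinAt SB (Gstep p φ j ∩ {z | z.2.2.1 < z.2.2.2}) z₀ :=
      hSBcwa _ (fun z hz => ldom_of_mem hsub hz.1 hz.2) (ldom_of_mem hsub hz₀ hlt)
    exact hcwa.congr (fun z hz => if_neg (not_le.mpr hz.2)) (if_neg (not_le.mpr hlt))
  · -- α₀ = β₀ : split into the two regions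
    have hcover : Gstep p φ j ⊆ (Gstep p φ j ∩ {z | z.2.2.2 ≤ z.2.2.1}) ∪
        (Gstep p φ j ∩ {z | z.2.2.1 < z.2.2.2}) := by
      intro z hz
      rcases le_or_gt z.2.2.2 z.2.2.1 with h | h
      · exact Or.inl ⟨hz, h⟩
      · exact Or.inr ⟨hz, h⟩
    refine ContinuousWithinAt.mono (ContinuousWithinAt.union ?_ ?_) hcover
    · exact continuous_fst.continuousWithinAt.congr (fun z hz => step_guard LD hz.2)
        (step_guard LD heq.ge)
    · set S₂ := Gstep p φ j ∩ {z : E × C(I,B) × ℝ × ℝ | z.2.2.1 < z.2.2.2} with hS₂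
      by_cases hcl : z₀ ∈ closure S₂
      · have hts : z₀.2.1 (prj z₀.2.2.1) ∈ tsupport ⇑(φ j) := by
          set η : E × C(I,B) × ℝ × ℝ → B := fun z => z.2.1 (prj z.2.2.1) with hη
          have hηc : Continuous η :=
            continuous_evalr.comp ((continuous_fst.comp continuous_snd).prodMk (by fun_prop))
          have himg : η '' S₂ ⊆ tsupport ⇑(φ j) := by
            rintro - ⟨z, hz, rfl⟩
            exact hz.1.2.2.2.2 hz.2 _ ⟨le_refl _, hz.2.le⟩
          have hmem : η z₀ ∈ closure (η '' S₂) :=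
            image_closure_subset_closure_image hηc ⟨z₀, hcl, rfl⟩
          exact closure_minimal himg (isClosed_tsupport _) hmem
        have hrpc : rp z₀.2.1 z₀.2.2.1 z₀.2.2.2
            = ContinuousMap.const I (z₀.2.1 (prj z₀.2.2.1)) := by
          rw [← heq]; exact rp_self _ _
        have hz₀dom : ζ z₀ ∈ ldom p (U j) := by
          show (z₀.1, rp z₀.2.1 z₀.2.2.1 z₀.2.2.2) ∈ ldom p (U j)
          rw [hrpc]
          exact ⟨hz₀.2.2.2.1, fun t => hsub j hts⟩
        have hcwa : ContinuousWithinAt SB S₂ z₀ :=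
          hSBcwa _ (fun z hz => ldom_of_mem hsub hz.1 hz.2) hz₀dom
        refine hcwa.congr (fun z hz => if_neg (not_le.mpr hz.2)) ?_
        rw [step_guard LD heq.ge]
        show z₀.1 = (LD j).L (z₀.1, rp z₀.2.1 z₀.2.2.1 z₀.2.2.2) 1
        rw [hrpc, ← hz₀.2.2.2.1, (LD j).cst z₀.1 (by rw [hz₀.2.2.2.1]; exact hsub j hts)]
        rfl
      · exact continuousWithinAt_of_notMem_closure hcl
  · -- β₀ < α₀ : locally guarded
    have hopen : IsOpen {z : E × C(I,B) × ℝ × ℝ | z.2.2.2 < z.2.2.1} :=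
      isOpen_lt (by fun_prop) (by fun_prop)
    have hev : ∀ᶠ z in 𝓝[Gstep p φ j] z₀, step p LD j z = z.1 :=
      ((hopen.eventually_mem hgt).mono (fun z hz => step_guard LD hz.le)).filter_mono
        nhdsWithin_le_nhds
    exact continuous_fst.continuousWithinAt.congr_of_eventuallyEq hev (step_guard LD hgt.le)

end Step

/-- breakpoints for a tuple of length `n` clipped into the window `[a,b]`. -/
def brk (n : ℕ) (a b : ℝ) (k : ℕ) : ℝ := max a (min b ((k : ℝ) / n))

lemma brk_mono {n : ℕ} {a b : ℝ} {k k' : ℕ} (h : k ≤ k') : brk n a b k ≤ brk n a b k' := by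
  have hd : ((k:ℝ))/n ≤ ((k':ℝ))/n := by gcongr <;> exact_mod_cast h
  exact max_le_max (le_refl a) (min_le_min (le_refl b) hd)

lemma brk_nonneg {n : ℕ} {a b : ℝ} (ha : 0 ≤ a) (k : ℕ) : 0 ≤ brk n a b k :=
  le_trans ha (le_max_left _ _)

lemma brk_le_one {n : ℕ} {a b : ℝ} (ha : a ≤ 1) (hb : b ≤ 1) (k : ℕ) : brk n a b k ≤ 1 :=
  max_le ha (le_trans (min_le_left _ _) hb)

lemma brk_of_le {n : ℕ} {a b : ℝ} (h : b ≤ a) (k : ℕ) : brk n a b k = a :=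
  max_eq_left (le_trans (min_le_left _ _) h)

lemma brk_zero {n : ℕ} {a b : ℝ} (ha : 0 ≤ a) : brk n a b 0 = a := by
  simp only [brk, Nat.cast_zero, zero_div]
  exact max_eq_left ((min_le_right _ _).trans ha)

lemma brk_last {n : ℕ} (hn : n ≠ 0) {a b : ℝ} (hb : b ≤ 1) : brk n a b n = max a b := by
  rw [brk, div_self (by exact_mod_cast hn : (n:ℝ) ≠ 0), min_eq_left hb]

lemma brk_window {n : ℕ} {a b : ℝ} {k : ℕ}
    (hlt : brk n a b k < brk n a b (k+1)) :
    ((k:ℝ))/n ≤ brk n a b k ∧ brk n a b (k+1) ≤ ((k+1:ℕ):ℝ)/n := by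
  constructor
  · by_contra hc
    push_neg at hc
    have h1 : min b ((k:ℝ)/n) < (k:ℝ)/n := lt_of_le_of_lt (le_max_right a _) hc
    have hb : b < (k:ℝ)/n := by
      rcases min_cases b ((k:ℝ)/n) with ⟨he, _⟩ | ⟨he, hle⟩
      · rw [he] at h1; exact h1
      · rw [he] at h1; exact absurd h1 (lt_irrefl _)
    have hbk : min b ((k:ℝ)/n) = b := min_eq_left hb.le
    have hstep : ((k:ℝ))/n ≤ ((k+1:ℕ):ℝ)/n := by
      push_cast
      gcongr <;> linarith
    have hbk1 : min b (((k+1:ℕ):ℝ)/n) = b := min_eq_left (hb.le.trans hstep)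
    rw [brk, brk, hbk, hbk1] at hlt
    exact absurd hlt (lt_irrefl _)
  · have h2 : a < brk n a b (k+1) := lt_of_le_of_lt (le_max_left _ _) hlt
    rw [brk, max_eq_right_iff.mpr ?_]
    · exact min_le_right _ _
    · by_contra hc
      push_neg at hc
      have : brk n a b (k+1) = a := max_eq_left hc.le
      rw [this] at h2
      exact absurd h2 (lt_irrefl _)

section Ext

variable {ι : Type u} {φ : PartitionOfUnity ι B univ} {U : ι → Set B}
  (LD : ∀ i, LiftData p (U i))

variable {p}

/-- iterated lifting through a tuple, positions `k, k+1, …` with global subdivision `n`. -/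
def extFrom (n : ℕ) : List ι → ℕ → (E × C(I,B) × ℝ × ℝ) → E
  | [], _, z => z.1
  | j :: l, k, z =>
      extFrom n l (k+1)
        (step p LD j (z.1, z.2.1, brk n z.2.2.1 z.2.2.2 k, brk n z.2.2.1 z.2.2.2 (k+1)), z.2)

/-- the good set for `extFrom`. -/
def GE (φ : PartitionOfUnity ι B univ) (n : ℕ) (l : List ι) (k : ℕ) :
    Set (E × C(I,B) × ℝ × ℝ) :=
  {z | 0 ≤ z.2.2.1 ∧ z.2.2.1 ≤ 1 ∧ z.2.2.2 ≤ 1 ∧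
       p z.1 = z.2.1 (prj (brk n z.2.2.1 z.2.2.2 k)) ∧
       ∀ m : Fin l.length, ∀ t ∈ Icc (((k+(m:ℕ):ℕ):ℝ)/n) (((k+(m:ℕ)+1:ℕ):ℝ)/n),
         z.2.1 (prj t) ∈ tsupport ⇑(φ (l.get m))}

lemma extFrom_guard (n : ℕ) (l : List ι) (k : ℕ) (z : E × C(I,B) × ℝ × ℝ)
    (h : z.2.2.2 ≤ z.2.2.1) : extFrom LD n l k z = z.1 := by
  induction l generalizing k z with
  | nil => rfl
  | cons j l ih =>
    show extFrom LD n l (k+1) _ = z.1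
    rw [ih (k+1) _ (by exact h)]
    show step p LD j (z.1, z.2.1, brk n z.2.2.1 z.2.2.2 k, brk n z.2.2.1 z.2.2.2 (k+1)) = z.1
    refine step_guard LD (show brk n z.2.2.1 z.2.2.2 (k+1) ≤ brk n z.2.2.1 z.2.2.2 k from ?_)
    rw [brk_of_le h, brk_of_le h]

/-- the first step's input belongs to `Gstep`, and the next state stays in `GE`. -/
lemma GE_step (hsub : ∀ i, tsupport ⇑(φ i) ⊆ U i) {n : ℕ} {j : ι} {l : List ι} {k : ℕ}
    {z : E × C(I,B) × ℝ × ℝ}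
    (hz : z ∈ GE (p := p) φ n (j :: l) k) :
    (z.1, z.2.1, brk n z.2.2.1 z.2.2.2 k, brk n z.2.2.1 z.2.2.2 (k+1)) ∈ Gstep p φ j ∧
    (step p LD j (z.1, z.2.1, brk n z.2.2.1 z.2.2.2 k, brk n z.2.2.1 z.2.2.2 (k+1)), z.2)
      ∈ GE (p := p) φ n l (k+1) := by
  obtain ⟨h0, h1, hb1, heq, hctrl⟩ := hz
  have hstep_mem : (z.1, z.2.1, brk n z.2.2.1 z.2.2.2 k, brk n z.2.2.1 z.2.2.2 (k+1))
      ∈ Gstep p φ j := by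
    refine ⟨brk_nonneg h0 k, brk_le_one h1 hb1 k, brk_le_one h1 hb1 (k+1), heq, ?_⟩
    intro hlt t ht
    obtain ⟨hw1, hw2⟩ := brk_window hlt
    have hm0 := hctrl ⟨0, Nat.succ_pos _⟩
    simp only [Fin.val_mk, Nat.add_zero] at hm0
    refine hm0 t ⟨le_trans ?_ ht.1, le_trans ht.2 ?_⟩
    · exact hw1
    · exact hw2
  refine ⟨hstep_mem, h0, h1, hb1, ?_, ?_⟩
  · show p (step p LD j _) = _
    rw [step_proj LD hsub hstep_mem]
    show z.2.1 (prj (max (brk n z.2.2.1 z.2.2.2 k) (brk n z.2.2.1 z.2.2.2 (k+1)))) = _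
    rw [max_eq_right (brk_mono (Nat.le_succ k))]
  · intro m t ht
    have hm := hctrl ⟨(m:ℕ)+1, Nat.succ_lt_succ m.2⟩
    simp only [Fin.val_mk] at hm
    have harith1 : (k + ((m:ℕ)+1) : ℕ) = (k + 1 + (m:ℕ) : ℕ) := by omega
    rw [harith1] at hm
    exact hm t ht

lemma extFrom_proj (hsub : ∀ i, tsupport ⇑(φ i) ⊆ U i) {n : ℕ} (l : List ι) (k : ℕ)
    {z : E × C(I,B) × ℝ × ℝ} (hz : z ∈ GE (p := p) φ n l k) :
    p (extFrom LD n l k z) = z.2.1 (prj (brk n z.2.2.1 z.2.2.2 (k + l.length))) := by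
  induction l generalizing k z with
  | nil => simpa [extFrom] using hz.2.2.2.1
  | cons j l ih =>
    obtain ⟨hgs, hnext⟩ := GE_step LD hsub hz
    show p (extFrom LD n l (k+1) _) = _
    rw [ih (k+1) hnext]
    show z.2.1 (prj (brk n z.2.2.1 z.2.2.2 ((k+1) + l.length))) = _
    have harith : (k+1) + l.length = k + (j :: l).length := by
      rw [List.length_cons]; omega
    rw [harith]

lemma extFrom_cwa (hsub : ∀ i, tsupport ⇑(φ i) ⊆ U i) {n : ℕ} (l : List ι) (k : ℕ)
    {z₀ : E × C(I,B) × ℝ × ℝ} (hz₀ : z₀ ∈ GE (p := p) φ n l k) :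
    ContinuousWithinAt (extFrom LD n l k) (GE (p := p) φ n l k) z₀ := by
  induction l generalizing k z₀ with
  | nil => exact continuous_fst.continuousWithinAt
  | cons j l ih =>
    obtain ⟨hgs, hnext⟩ := GE_step LD hsub hz₀
    set θ : E × C(I,B) × ℝ × ℝ → E × C(I,B) × ℝ × ℝ :=
      fun z => (z.1, z.2.1, brk n z.2.2.1 z.2.2.2 k, brk n z.2.2.1 z.2.2.2 (k+1)) with hθ
    have hθc : Continuous θ := by
      refine continuous_fst.prodMk ((continuous_fst.comp continuous_snd).prodMk
        (Continuous.prodMk ?_ ?_)) <;>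
      · unfold brk
        fun_prop
    set Ψ : E × C(I,B) × ℝ × ℝ → E × C(I,B) × ℝ × ℝ :=
      fun z => (step p LD j (θ z), z.2) with hΨ
    have hΨcwa : ContinuousWithinAt Ψ (GE (p := p) φ n (j :: l) k) z₀ := by
      refine ContinuousWithinAt.prodMk ?_ continuous_snd.continuousWithinAt
      exact ContinuousWithinAt.comp (g := step p LD j) (f := θ) (s := GE (p := p) φ n (j :: l) k)
        (t := Gstep p φ j) (step_cwa LD hsub hgs) hθc.continuousWithinAt
        (fun z hz => (GE_step LD hsub hz).1)
    have hmaps : MapsTo Ψ (GE (p := p) φ n (j :: l) k) (GE (p := p) φ n l (k+1)) :=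
      fun z hz => (GE_step LD hsub hz).2
    exact ContinuousWithinAt.comp (g := extFrom LD n l (k+1)) (f := Ψ)
      (s := GE (p := p) φ n (j :: l) k) (t := GE (p := p) φ n l (k+1))
      (ih (k+1) hnext) hΨcwa hmaps

end Ext

section Tuples

variable {ι : Type u} (φ : PartitionOfUnity ι B univ)

lemma seg_le {n m k : ℕ} (h : m ≤ k) : ((m:ℕ):ℝ)/n ≤ ((k:ℕ):ℝ)/n := by
  gcongr <;> exact_mod_cast h

/-- the weight of a tuple `c` on a path `ω`. -/
def ell : List ι → C(I,B) → ℝ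
  | [], _ => 0
  | c@(_ :: _), ω => ∏ m : Fin c.length,
      minOn (φ (c.get m)) (((m:ℕ):ℝ)/(c.length:ℝ)) ((((m:ℕ)+1:ℕ):ℝ)/(c.length:ℝ)) ω

lemma ell_nil' (ω : C(I,B)) : ell φ [] ω = 0 := rfl

lemma ell_of_ne_nil {c : List ι} (h : c ≠ []) (ω : C(I,B)) :
    ell φ c ω = ∏ m : Fin c.length,
      minOn (φ (c.get m)) (((m:ℕ):ℝ)/(c.length:ℝ)) ((((m:ℕ)+1:ℕ):ℝ)/(c.length:ℝ)) ω := by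
  cases c with
  | nil => exact absurd rfl h
  | cons j l => rfl

lemma ell_nonneg (c : List ι) (ω : C(I,B)) : 0 ≤ ell φ c ω := by
  by_cases h : c = []
  · subst h; rw [ell_nil']
  · rw [ell_of_ne_nil φ h]
    exact Finset.prod_nonneg fun m _ => minOn_nonneg (fun x => φ.nonneg _ x) ω

lemma ell_le_one (c : List ι) (ω : C(I,B)) : ell φ c ω ≤ 1 := by
  by_cases h : c = []
  · subst h; rw [ell_nil']; exact zero_le_one
  · rw [ell_of_ne_nil φ h]
    exact Finset.prod_le_one (fun m _ => minOn_nonneg (fun x => φ.nonneg _ x) ω)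
      (fun m _ => minOn_le_one (seg_le (Nat.le_succ _)) (fun x => φ.le_one _ x) ω)

lemma continuous_ell (c : List ι) : Continuous (ell φ c) := by
  by_cases h : c = []
  · subst h
    have : ell φ ([] : List ι) = fun _ => (0:ℝ) := rfl
    rw [this]
    exact continuous_const
  · have : ell φ c = fun ω => ∏ m : Fin c.length,
        minOn (φ (c.get m)) (((m:ℕ):ℝ)/(c.length:ℝ)) ((((m:ℕ)+1:ℕ):ℝ)/(c.length:ℝ)) ω :=
      funext fun ω => ell_of_ne_nil φ h ω
    rw [this]
    exact continuous_finset_prod _ fun m _ => continuous_minOn (seg_le (Nat.le_succ _))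

lemma ell_pos_factor {c : List ι} {ω : C(I,B)} (h : 0 < ell φ c ω) (m : Fin c.length) :
    0 < minOn (φ (c.get m)) (((m:ℕ):ℝ)/(c.length:ℝ)) ((((m:ℕ)+1:ℕ):ℝ)/(c.length:ℝ)) ω := by
  by_cases hc : c = []
  · exfalso
    subst hc
    rw [ell_nil'] at h
    exact absurd h (lt_irrefl 0)
  · rw [ell_of_ne_nil φ hc] at h
    rcases lt_or_ge 0 (minOn (φ (c.get m)) (((m:ℕ):ℝ)/(c.length:ℝ))
      ((((m:ℕ)+1:ℕ):ℝ)/(c.length:ℝ)) ω) with hpos | hle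
    · exact hpos
    · exfalso
      have h0 : minOn (φ (c.get m)) (((m:ℕ):ℝ)/(c.length:ℝ))
          ((((m:ℕ)+1:ℕ):ℝ)/(c.length:ℝ)) ω = 0 :=
        le_antisymm hle (minOn_nonneg (fun x => φ.nonneg _ x) ω)
      rw [Finset.prod_eq_zero (Finset.mem_univ m) h0] at h
      exact absurd h (lt_irrefl 0)

/-- the control set of a tuple. -/
def Ctrl (c : List ι) : Set C(I,B) :=
  {ω | ∀ m : Fin c.length,
    ∀ t ∈ Icc (((m:ℕ):ℝ)/(c.length:ℝ)) ((((m:ℕ)+1:ℕ):ℝ)/(c.length:ℝ)),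
      ω (prj t) ∈ tsupport ⇑(φ (c.get m))}

lemma isClosed_Ctrl (c : List ι) : IsClosed (Ctrl φ c) := by
  have : Ctrl φ c = ⋂ (m : Fin c.length),
      ⋂ (t : ℝ), ⋂ (_ : t ∈ Icc (((m:ℕ):ℝ)/(c.length:ℝ)) ((((m:ℕ)+1:ℕ):ℝ)/(c.length:ℝ))),
        (fun ω : C(I,B) => ω (prj t)) ⁻¹' (tsupport ⇑(φ (c.get m))) := by
    ext ω; simp [Ctrl]
  rw [this]
  exact isClosed_iInter fun m => isClosed_iInter fun t => isClosed_iInter fun _ =>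
    (isClosed_tsupport _).preimage (by fun_prop)

lemma ellpos_subset_Ctrl (c : List ι) : {ω : C(I,B) | 0 < ell φ c ω} ⊆ Ctrl φ c := by
  intro ω hω m t ht
  exact subset_closure (ne_of_gt (pos_of_minOn_pos (seg_le (Nat.le_succ _)) ω
    (ell_pos_factor φ hω m) ht))

lemma closure_ellpos_subset_Ctrl (c : List ι) :
    closure {ω : C(I,B) | 0 < ell φ c ω} ⊆ Ctrl φ c :=
  closure_minimal (ellpos_subset_Ctrl φ c) (isClosed_Ctrl φ c)

/-- every path admits a tuple of positive weight. -/
lemma exists_ell_pos (ω : C(I,B)) : ∃ c : List ι, c ≠ [] ∧ 0 < ell φ c ω := by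
  classical
  -- every point of B lies in the (open) support of some φ j
  have hptwise : ∀ b : B, ∃ j, 0 < φ j b := by
    intro b
    by_contra hc
    push_neg at hc
    have hzero : ∀ j, φ j b = 0 := fun j => le_antisymm (hc j) (φ.nonneg j b)
    have := φ.sum_eq_one (mem_univ b)
    rw [finsum_eq_zero_of_forall_eq_zero hzero] at this
    exact absurd this (by norm_num)
  set O : ι → Set ℝ := fun j => (fun t : ℝ => φ j (ω (prj t))) ⁻¹' (Ioi 0) with hO
  have hOopen : ∀ j, IsOpen (O j) := fun j => isOpen_Ioi.preimage (by fun_prop)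
  have hcover : Icc (0:ℝ) 1 ⊆ ⋃ j, O j := by
    intro t _
    obtain ⟨j, hj⟩ := hptwise (ω (prj t))
    exact mem_iUnion.mpr ⟨j, hj⟩
  obtain ⟨δ, hδ, hball⟩ := lebesgue_number_lemma_of_metric isCompact_Icc hOopen hcover
  obtain ⟨n, hn⟩ := exists_nat_one_div_lt hδ
  -- choose for each segment a good index
  have hseg : ∀ m : Fin (n+1), ∃ j, Metric.ball (((m:ℕ):ℝ)/((n+1:ℕ):ℝ)) δ ⊆ O j := by
    intro m
    apply hball
    constructor
    · positivity
    · rw [div_le_one (by positivity)]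
      exact_mod_cast m.2.le
  choose jj hjj using hseg
  have hnenil : List.ofFn jj ≠ [] := by
    intro hcon
    have := congrArg List.length hcon
    rw [List.length_ofFn] at this
    simp at this
  refine ⟨List.ofFn jj, hnenil, ?_⟩
  rw [ell_of_ne_nil φ hnenil]
  apply Finset.prod_pos
  intro m _
  apply minOn_pos (seg_le (Nat.le_succ _))
  intro t ht
  have hlen : (List.ofFn jj).length = n + 1 := List.length_ofFn
  have hget : (List.ofFn jj).get m = jj (Fin.cast hlen m) := List.get_ofFn jj m
  rw [hget]
  have hlenR : (((List.ofFn jj).length : ℕ) : ℝ) = ((n+1:ℕ):ℝ) := by rw [hlen]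
  rw [hlenR] at ht
  have hmem : t ∈ Metric.ball ((((Fin.cast hlen m):ℕ):ℝ)/((n+1:ℕ):ℝ)) δ := by
    rw [Real.ball_eq_Ioo]
    have hc : (((Fin.cast hlen m):ℕ):ℝ) = ((m:ℕ):ℝ) := rfl
    rw [hc]
    have h1 := ht.1
    have h2 := ht.2
    have hsplit : (((m:ℕ)):ℝ)/((n:ℝ)+1) + 1/((n:ℝ)+1) = (((m:ℕ):ℝ)+1)/((n:ℝ)+1) := by
      ring
    push_cast at h1 h2 ⊢
    constructor
    · linarith
    · linarith
  exact hjj (Fin.cast hlen m) hmem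

/-- eligibility: near any path, tuples with nonzero weight only use finitely many indices. -/
lemma exists_nbhd_J (ω₀ : C(I,B)) :
    ∃ N : Set C(I,B), IsOpen N ∧ ω₀ ∈ N ∧ ∃ J : Finset ι,
      ∀ ω ∈ N, ∀ i : ι, (∃ t : I, ω t ∈ tsupport ⇑(φ i)) → i ∈ J := by
  classical
  have hK : IsCompact (range ω₀) := isCompact_range (map_continuous ω₀)
  -- local finiteness of the supports
  have hloc : ∀ b : B, ∃ V : Set B, IsOpen V ∧ b ∈ V ∧
      {i : ι | (Function.support ⇑(φ i) ∩ V).Nonempty}.Finite := by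
    intro b
    obtain ⟨W, hW, hfin⟩ := φ.locallyFinite b
    obtain ⟨V, hVW, hVopen, hbV⟩ := mem_nhds_iff.mp hW
    exact ⟨V, hVopen, hbV, hfin.subset fun i ⟨x, hx⟩ => ⟨x, hx.1, hVW hx.2⟩⟩
  choose V hVopen hbV hVfin using hloc
  obtain ⟨S, hS⟩ := hK.elim_finite_subcover V hVopen
    (fun b ⟨t, ht⟩ => mem_iUnion.mpr ⟨b, ht ▸ hbV b⟩)
  set O : Set B := ⋃ b ∈ S, V b with hOdef
  have hOopen : IsOpen O := isOpen_biUnion fun b _ => hVopen b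
  refine ⟨{ω | MapsTo ⇑ω univ O}, ContinuousMap.isOpen_setOf_mapsTo isCompact_univ hOopen,
    fun t _ => hS (mem_range_self t), ?_⟩
  refine ⟨S.biUnion (fun b => (hVfin b).toFinset), ?_⟩
  rintro ω hω i ⟨t, ht⟩
  have hmem : ω t ∈ O := hω (mem_univ t)
  rw [hOdef] at hmem
  obtain ⟨b, hb, hbt⟩ := mem_iUnion₂.mp hmem
  refine Finset.mem_biUnion.mpr ⟨b, hb, (Set.Finite.mem_toFinset _).mpr ?_⟩
  -- tsupport meets the open set V b, hence so does the support
  have : (Function.support ⇑(φ i) ∩ V b).Nonempty := by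
    by_contra hc
    rw [Set.not_nonempty_iff_eq_empty] at hc
    have hsubc : Function.support ⇑(φ i) ⊆ (V b)ᶜ := by
      intro x hx
      by_contra hxc
      rw [Set.notMem_compl_iff] at hxc
      exact absurd (Set.mem_inter hx hxc) (by rw [hc]; exact notMem_empty x)
    have : tsupport ⇑(φ i) ⊆ (V b)ᶜ :=
      closure_minimal hsubc (isClosed_compl_iff.mpr (hVopen b))
    exact this ht hbt
  exact this

/-- lists with entries in a finite set and bounded length form a finite set. -/
lemma finite_lists (J : Finset ι) (n : ℕ) :
    {c : List ι | (∀ x ∈ c, x ∈ J) ∧ c.length < n}.Finite := by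
  classical
  have h1 : {l : List {x // x ∈ J} | l.length < n}.Finite := List.finite_length_lt _ n
  refine (h1.image (fun l => l.map Subtype.val)).subset ?_
  rintro c ⟨hc, hlen⟩
  refine ⟨c.attach.map (fun x => (⟨x.1, hc _ x.2⟩ : {x // x ∈ J})), ?_, ?_⟩
  · simpa using hlen
  · simp [List.map_map]

lemma ell_entries {N : Set C(I,B)} {J : Finset ι}
    (hJ : ∀ ω ∈ N, ∀ i : ι, (∃ t : I, ω t ∈ tsupport ⇑(φ i)) → i ∈ J)
    {ω : C(I,B)} (hω : ω ∈ N) {c : List ι} (h : 0 < ell φ c ω) : ∀ x ∈ c, x ∈ J := by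
  intro x hx
  obtain ⟨m, rfl⟩ := List.mem_iff_get.mp hx
  apply hJ ω hω
  have hfac := ell_pos_factor φ h m
  have hpt := pos_of_minOn_pos (seg_le (Nat.le_succ _)) ω hfac
    ⟨le_refl _, seg_le (Nat.le_succ _)⟩
  exact ⟨prj (((m:ℕ):ℝ)/(c.length:ℝ)), subset_closure (ne_of_gt hpt)⟩

/-- sum of weights of tuples of length `< n`. -/
def sig (n : ℕ) (ω : C(I,B)) : ℝ := ∑' c : List ι, if c.length < n then ell φ c ω else 0

lemma sig_term_nonneg (n : ℕ) (ω : C(I,B)) (c : List ι) :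
    0 ≤ if c.length < n then ell φ c ω else 0 := by
  split
  · exact ell_nonneg φ c ω
  · exact le_refl 0

lemma sig_summable (n : ℕ) (ω : C(I,B)) :
    Summable (fun c : List ι => if c.length < n then ell φ c ω else 0) := by
  classical
  obtain ⟨N, -, hωN, J, hJ⟩ := exists_nbhd_J φ ω
  apply summable_of_ne_finset_zero (s := (finite_lists J n).toFinset)
  intro c hc
  by_cases hlen : c.length < n
  · rw [if_pos hlen]
    by_contra hne
    have hpos : 0 < ell φ c ω := lt_of_le_of_ne (ell_nonneg φ c ω) (Ne.symm hne)
    exact hc ((Set.Finite.mem_toFinset _).mpr ⟨ell_entries φ hJ hωN hpos, hlen⟩)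
  · exact if_neg hlen

lemma sig_nonneg (n : ℕ) (ω : C(I,B)) : 0 ≤ sig φ n ω :=
  tsum_nonneg (sig_term_nonneg φ n ω)

lemma le_sig {n : ℕ} {c : List ι} (hlen : c.length < n) (ω : C(I,B)) :
    ell φ c ω ≤ sig φ n ω := by
  have h := Summable.le_tsum (sig_summable φ n ω) c (fun c' _ => sig_term_nonneg φ n ω c')
  rw [if_pos hlen] at h
  exact h

lemma sig_cont (n : ℕ) : Continuous (sig φ n) := by
  classical
  rw [continuous_iff_continuousAt]
  intro ω₀
  obtain ⟨N, hNo, hωN, J, hJ⟩ := exists_nbhd_J φ ω₀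
  set F := (finite_lists J n).toFinset with hF
  have heq : ∀ ω ∈ N, sig φ n ω = ∑ c ∈ F, if c.length < n then ell φ c ω else 0 := by
    intro ω hω
    apply tsum_eq_sum
    intro c hc
    by_cases hlen : c.length < n
    · rw [if_pos hlen]
      by_contra hne
      have hpos : 0 < ell φ c ω := lt_of_le_of_ne (ell_nonneg φ c ω) (Ne.symm hne)
      exact hc ((Set.Finite.mem_toFinset _).mpr ⟨ell_entries φ hJ hω hpos, hlen⟩)
    · exact if_neg hlen
  have hFc : ContinuousAt (fun ω => ∑ c ∈ F, if c.length < n then ell φ c ω else 0) ω₀ := by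
    apply Continuous.continuousAt
    apply continuous_finset_sum
    intro c _
    by_cases hlen : c.length < n
    · simpa [hlen] using continuous_ell φ c
    · simpa [hlen] using continuous_const
  apply hFc.congr
  filter_upwards [hNo.mem_nhds hωN] with ω hω
  exact (heq ω hω).symm

/-- the corrected weight. -/
def gam (c : List ι) (ω : C(I,B)) : ℝ :=
  max 0 (ell φ c ω - c.length * sig φ c.length ω)

lemma gam_nonneg (c : List ι) (ω : C(I,B)) : 0 ≤ gam φ c ω := le_max_left _ _

lemma gam_cont (c : List ι) : Continuous (gam φ c) :=
  continuous_const.max ((continuous_ell φ c).sub (continuous_const.mul (sig_cont φ c.length)))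

lemma ell_pos_of_gam_ne_zero {c : List ι} {ω : C(I,B)} (h : gam φ c ω ≠ 0) :
    0 < ell φ c ω := by
  rw [gam] at h
  have hlt : 0 < ell φ c ω - c.length * sig φ c.length ω := by
    by_contra hc
    push_neg at hc
    exact h (max_eq_left hc)
  have := mul_nonneg (Nat.cast_nonneg c.length : (0:ℝ) ≤ c.length) (sig_nonneg φ c.length ω)
  linarith

lemma gam_nil (ω : C(I,B)) : gam φ [] ω = 0 := by
  rw [gam, ell_nil']
  simp

/-- locally, only finitely many tuples have nonzero corrected weight. -/
lemma gam_localfin (ω₀ : C(I,B)) :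
    ∃ N : Set C(I,B), IsOpen N ∧ ω₀ ∈ N ∧ ∃ F : Finset (List ι),
      ∀ ω ∈ N, ∀ c : List ι, gam φ c ω ≠ 0 → c ∈ F := by
  classical
  obtain ⟨N₁, hN₁o, hωN₁, J, hJ⟩ := exists_nbhd_J φ ω₀
  obtain ⟨c₀, hc₀ne, hc₀pos⟩ := exists_ell_pos φ ω₀
  set ε := ell φ c₀ ω₀ / 2 with hεdef
  have hε : 0 < ε := by
    rw [hεdef]; linarith
  set nb : ℕ := max (c₀.length + 1) (⌈1/ε⌉₊ + 1) with hnb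
  have hnb₁ : c₀.length < nb := lt_of_lt_of_le (Nat.lt_succ_self _) (le_max_left _ _)
  have hnb₂ : 1/ε < (nb:ℝ) := by
    have h1 : (1:ℝ)/ε ≤ (⌈1/ε⌉₊ : ℝ) := Nat.le_ceil _
    have h2 : ((⌈1/ε⌉₊ + 1 : ℕ) : ℝ) ≤ (nb : ℝ) := by
      exact_mod_cast le_max_right _ _
    push_cast at h2
    linarith
  refine ⟨N₁ ∩ {ω | ε < ell φ c₀ ω}, hN₁o.inter (isOpen_lt continuous_const
    (continuous_ell φ c₀)), ⟨hωN₁, by rw [hεdef]; simp only [mem_setOf_eq]; linarith⟩,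
    (finite_lists J nb).toFinset, ?_⟩
  rintro ω ⟨hω₁, hω₂⟩ c hgam
  have hellpos : 0 < ell φ c ω := ell_pos_of_gam_ne_zero φ hgam
  refine (Set.Finite.mem_toFinset _).mpr ⟨ell_entries φ hJ hω₁ hellpos, ?_⟩
  by_contra hlen
  push_neg at hlen
  have hσ : ε < sig φ c.length ω :=
    lt_of_lt_of_le hω₂ (le_sig φ (lt_of_lt_of_le hnb₁ hlen) ω)
  have hnl : (1:ℝ) < (c.length : ℝ) * sig φ c.length ω := by
    have hb : (nb:ℝ) ≤ (c.length:ℝ) := by exact_mod_cast hlen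
    have h1 : 1 < ε * (nb:ℝ) := by
      rw [div_lt_iff₀ hε] at hnb₂
      linarith
    have h2 : ε * (nb:ℝ) ≤ ε * (c.length:ℝ) := by
      apply mul_le_mul_of_nonneg_left hb hε.le
    have h3 : ε * (c.length:ℝ) ≤ sig φ c.length ω * (c.length:ℝ) := by
      apply mul_le_mul_of_nonneg_right hσ.le
      positivity
    nlinarith
  have hle1 := ell_le_one φ c ω
  apply hgam
  rw [gam]
  apply max_eq_left
  linarith

/-- total corrected weight. -/
def tot (ω : C(I,B)) : ℝ := ∑' c : List ι, gam φ c ω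

lemma gam_summable (ω : C(I,B)) : Summable (fun c : List ι => gam φ c ω) := by
  obtain ⟨N, -, hωN, F, hF⟩ := gam_localfin φ ω
  apply summable_of_ne_finset_zero (s := F)
  intro c hc
  by_contra hne
  exact hc (hF ω hωN c hne)

lemma tot_cont : Continuous (tot φ) := by
  rw [continuous_iff_continuousAt]
  intro ω₀
  obtain ⟨N, hNo, hωN, F, hF⟩ := gam_localfin φ ω₀
  have heq : ∀ ω ∈ N, tot φ ω = ∑ c ∈ F, gam φ c ω := by
    intro ω hω
    apply tsum_eq_sum
    intro c hc
    by_contra hne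
    exact hc (hF ω hω c hne)
  have hFc : ContinuousAt (fun ω => ∑ c ∈ F, gam φ c ω) ω₀ :=
    (continuous_finset_sum _ (fun c _ => gam_cont φ c)).continuousAt
  apply hFc.congr
  filter_upwards [hNo.mem_nhds hωN] with ω hω
  exact (heq ω hω).symm

lemma tot_pos (ω : C(I,B)) : 0 < tot φ ω := by
  classical
  obtain ⟨c₁, hc₁ne, hc₁pos⟩ := exists_ell_pos φ ω
  have hP : ∃ n : ℕ, ∃ c : List ι, c.length = n ∧ 0 < ell φ c ω := ⟨c₁.length, c₁, rfl, hc₁pos⟩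
  set n₀ := Nat.find hP with hn₀
  obtain ⟨c₀, hc₀len, hc₀pos⟩ := Nat.find_spec hP
  have hσ : sig φ c₀.length ω = 0 := by
    rw [sig]
    have hzero : (fun c : List ι => if c.length < c₀.length then ell φ c ω else 0)
        = fun _ => (0:ℝ) := by
      funext c
      by_cases hlen : c.length < c₀.length
      · rw [if_pos hlen]
        by_contra hne
        have hpos : 0 < ell φ c ω := lt_of_le_of_ne (ell_nonneg φ c ω) (Ne.symm hne)
        have : n₀ ≤ c.length := Nat.find_le ⟨c, rfl, hpos⟩
        rw [hc₀len] at hlen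
        omega
      · exact if_neg hlen
    rw [hzero, tsum_zero]
  have hgam : gam φ c₀ ω = ell φ c₀ ω := by
    rw [gam, hσ]
    simp
    exact (ell_nonneg φ c₀ ω)
  have hle := Summable.le_tsum (gam_summable φ ω) c₀ (fun c' _ => gam_nonneg φ c' ω)
  rw [hgam] at hle
  exact lt_of_lt_of_le hc₀pos hle

/-- the partition of unity on the path space, indexed by tuples. -/
def mu (c : List ι) (ω : C(I,B)) : ℝ := gam φ c ω / tot φ ω

lemma mu_nonneg (c : List ι) (ω : C(I,B)) : 0 ≤ mu φ c ω :=
  div_nonneg (gam_nonneg φ c ω) (tot_pos φ ω).le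

lemma mu_cont (c : List ι) : Continuous (mu φ c) :=
  (gam_cont φ c).div (tot_cont φ) (fun ω => (tot_pos φ ω).ne')

lemma mu_nil (ω : C(I,B)) : mu φ [] ω = 0 := by
  rw [mu, gam_nil]
  exact zero_div _

lemma mu_summable (ω : C(I,B)) : Summable (fun c : List ι => mu φ c ω) :=
  (gam_summable φ ω).div_const _

lemma mu_tsum_one (ω : C(I,B)) : ∑' c : List ι, mu φ c ω = 1 := by
  rw [show (fun c : List ι => mu φ c ω) = fun c => gam φ c ω / tot φ ω from rfl]
  rw [tsum_div_const]
  exact div_self (tot_pos φ ω).ne'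

lemma sum_mu_le_one (S : Finset (List ι)) (ω : C(I,B)) : ∑ c ∈ S, mu φ c ω ≤ 1 := by
  rw [← mu_tsum_one φ ω]
  exact Summable.sum_le_tsum S (fun c _ => mu_nonneg φ c ω) (mu_summable φ ω)

lemma ell_pos_of_mu_ne_zero {c : List ι} {ω : C(I,B)} (h : mu φ c ω ≠ 0) : 0 < ell φ c ω := by
  apply ell_pos_of_gam_ne_zero φ
  intro hzero
  rw [mu, hzero, zero_div] at h
  exact h rfl

lemma mu_localfin (ω₀ : C(I,B)) :
    ∃ N : Set C(I,B), IsOpen N ∧ ω₀ ∈ N ∧ ∃ F : Finset (List ι),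
      ∀ ω ∈ N, ∀ c : List ι, mu φ c ω ≠ 0 → c ∈ F := by
  obtain ⟨N, hNo, hωN, F, hF⟩ := gam_localfin φ ω₀
  refine ⟨N, hNo, hωN, F, fun ω hω c hc => hF ω hω c ?_⟩
  intro hzero
  rw [mu, hzero, zero_div] at hc
  exact hc rfl

lemma closure_mu_subset_Ctrl (c : List ι) :
    closure {ω : C(I,B) | mu φ c ω ≠ 0} ⊆ Ctrl φ c := by
  apply closure_minimal _ (isClosed_Ctrl φ c)
  intro ω hω
  exact ellpos_subset_Ctrl φ c (ell_pos_of_mu_ne_zero φ hω)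

end Tuples

section Assemble

open scoped Classical

variable {ι : Type u} (φ : PartitionOfUnity ι B univ) {U : ι → Set B}
  (LD : ∀ i, LiftData p (U i))

variable {p}

/-- partial sums of `mu` along a list of tuples. -/
def lsum (l : List (List ι)) (ω : C(I,B)) : ℝ := (l.map (fun c => mu φ c ω)).sum

lemma lsum_nil (ω : C(I,B)) : lsum φ [] ω = 0 := rfl

lemma lsum_cons (c : List ι) (l : List (List ι)) (ω : C(I,B)) :
    lsum φ (c :: l) ω = mu φ c ω + lsum φ l ω := by
  rw [lsum, List.map_cons, List.sum_cons]
  rfl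

lemma lsum_nonneg (l : List (List ι)) (ω : C(I,B)) : 0 ≤ lsum φ l ω := by
  apply List.sum_nonneg
  intro x hx
  obtain ⟨c, -, rfl⟩ := List.mem_map.mp hx
  exact mu_nonneg φ c ω

lemma lsum_le_one {l : List (List ι)} (hl : l.Nodup) (ω : C(I,B)) : lsum φ l ω ≤ 1 := by
  rw [lsum, ← List.sum_toFinset _ hl]
  exact sum_mu_le_one φ l.toFinset ω

lemma lsum_cont (l : List (List ι)) : Continuous (lsum φ l) := by
  induction l with
  | nil => exact continuous_const
  | cons c l ih =>
    have : lsum φ (c :: l) = fun ω => mu φ c ω + lsum φ l ω :=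
      funext fun ω => lsum_cons φ c l ω
    rw [this]
    exact (mu_cont φ c).add ih

lemma lsum_filter (l : List (List ι)) (ω : C(I,B)) :
    lsum φ (l.filter (fun c => mu φ c ω ≠ 0)) ω = lsum φ l ω := by
  induction l with
  | nil => rfl
  | cons c l ih =>
    by_cases hc : mu φ c ω ≠ 0
    · rw [List.filter_cons_of_pos (by simpa using hc), lsum_cons, lsum_cons, ih]
    · push_neg at hc
      rw [List.filter_cons_of_neg (by simpa using hc), lsum_cons, ih, hc, zero_add]

/-- the domain for the global lift. -/
def DD : Set (E × C(I,B) × ℝ) :=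
  {z | p z.1 = z.2.1 0 ∧ 0 ≤ z.2.2 ∧ z.2.2 ≤ 1}

/-- iterated lifting along a list of tuples (last element of the list acts first). -/
def AA : List (List ι) → (E × C(I,B) × ℝ) → E
  | [], z => z.1
  | c :: l, z => extFrom LD c.length c 0
      (AA l z, z.2.1, lsum φ l z.2.1, min z.2.2 (lsum φ (c :: l) z.2.1))

lemma min_shift {v a m : ℝ} (h0 : 0 ≤ m) (hble : min v (m + a) ≤ a) :
    min v (m + a) = min v a := by
  rcases le_total v (m + a) with h | h
  · have hva : v ≤ a := by rwa [min_eq_left h] at hble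
    rw [min_eq_left h, min_eq_left hva]
  · have hm : m = 0 := by
      have h2 : m + a ≤ a := by rwa [min_eq_right h] at hble
      linarith
    rw [hm, zero_add]

/-- the `Ctrl` bridge into `GE` membership. -/
lemma mem_GE_of_Ctrl {c : List ι} {x : E} {ω : C(I,B)} {a b : ℝ}
    (hω : ω ∈ Ctrl φ c) (h0 : 0 ≤ a) (h1 : a ≤ 1) (hb : b ≤ 1)
    (hpx : p x = ω (prj a)) :
    ((x, ω, a, b) : E × C(I,B) × ℝ × ℝ) ∈ GE (p := p) φ c.length c 0 := by
  refine ⟨h0, h1, hb, ?_, ?_⟩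
  · show p x = ω (prj (brk c.length a b 0))
    rw [brk_zero h0]
    exact hpx
  · intro m t ht
    apply hω m t
    have e1 : ((0 + (m:ℕ) : ℕ) : ℝ) = ((m:ℕ) : ℝ) := by norm_num
    have e2 : ((0 + (m:ℕ) + 1 : ℕ) : ℝ) = (((m:ℕ) + 1 : ℕ) : ℝ) := by push_cast; ring
    rw [e1, e2] at ht
    exact ht

lemma AA_guard (l : List (List ι)) {z : E × C(I,B) × ℝ} (hv : z.2.2 ≤ 0) :
    AA φ LD l z = z.1 := by
  induction l with
  | nil => rfl
  | cons c l ih =>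
    show extFrom LD c.length c 0 _ = z.1
    rw [extFrom_guard]
    · exact ih
    · show min z.2.2 (lsum φ (c :: l) z.2.1) ≤ lsum φ l z.2.1
      exact le_trans (min_le_left _ _) (le_trans hv (lsum_nonneg φ l z.2.1))

lemma AA_proj (hsub : ∀ i, tsupport ⇑(φ i) ⊆ U i) {l : List (List ι)} (hl : l.Nodup)
    {z : E × C(I,B) × ℝ} (hz : z ∈ DD (p := p)) :
    p (AA φ LD l z) = z.2.1 (prj (min z.2.2 (lsum φ l z.2.1))) := by
  obtain ⟨hpz, hv0, hv1⟩ := hz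
  induction l with
  | nil =>
    show p z.1 = _
    rw [lsum_nil, min_eq_right hv0, prj_zero]
    exact hpz
  | cons c l ih =>
    have hlnd : l.Nodup := List.Nodup.of_cons hl
    have hIH := ih hlnd
    set a := lsum φ l z.2.1 with ha
    set b := min z.2.2 (lsum φ (c :: l) z.2.1) with hb
    show p (extFrom LD c.length c 0 (AA φ LD l z, z.2.1, a, b)) = z.2.1 (prj b)
    by_cases hble : b ≤ a
    · rw [extFrom_guard LD c.length c 0 _ hble]
      rw [hIH]
      congr 2
      rw [hb, lsum_cons]
      exact (min_shift (mu_nonneg φ c z.2.1) (by rw [← lsum_cons]; exact hble)).symm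
    · push_neg at hble
      have hbv : b ≤ z.2.2 := min_le_left _ _
      have hav : a ≤ z.2.2 := le_trans hble.le hbv
      have hmu : mu φ c z.2.1 ≠ 0 := by
        intro h0
        rw [hb, lsum_cons, h0, zero_add, ← ha] at hble
        exact absurd (min_le_right z.2.2 a) (not_le.mpr hble)
      have hcne : c ≠ [] := by
        intro hceq
        rw [hceq, mu_nil] at hmu
        exact hmu rfl
      have hctrl : z.2.1 ∈ Ctrl φ c := ellpos_subset_Ctrl φ c (ell_pos_of_mu_ne_zero φ hmu)
      have hmem : ((AA φ LD l z, z.2.1, a, b) : E × C(I,B) × ℝ × ℝ)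
          ∈ GE (p := p) φ c.length c 0 := by
        refine mem_GE_of_Ctrl φ hctrl (lsum_nonneg φ l z.2.1) (lsum_le_one φ hlnd z.2.1)
          (le_trans hbv hv1) ?_
        rw [hIH, min_eq_right hav]
      rw [extFrom_proj LD hsub c 0 hmem]
      have hn0 : c.length ≠ 0 := fun h => hcne (List.length_eq_zero_iff.mp h)
      have hzl : 0 + c.length = c.length := Nat.zero_add _
      rw [hzl, brk_last hn0 (le_trans hbv hv1), max_eq_right hble.le]

lemma AA_cons_congr {c : List ι} {l l' : List (List ι)} {z : E × C(I,B) × ℝ}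
    (h1 : AA φ LD l z = AA φ LD l' z) (h2 : lsum φ l z.2.1 = lsum φ l' z.2.1) :
    AA φ LD (c :: l) z = AA φ LD (c :: l') z := by
  show extFrom LD c.length c 0
      (AA φ LD l z, z.2.1, lsum φ l z.2.1, min z.2.2 (lsum φ (c :: l) z.2.1))
    = extFrom LD c.length c 0
      (AA φ LD l' z, z.2.1, lsum φ l' z.2.1, min z.2.2 (lsum φ (c :: l') z.2.1))
  rw [h1, h2, lsum_cons, lsum_cons, h2]

lemma AA_skip {c : List ι} {l : List (List ι)} {z : E × C(I,B) × ℝ}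
    (hc : mu φ c z.2.1 = 0) : AA φ LD (c :: l) z = AA φ LD l z := by
  show extFrom LD c.length c 0 _ = _
  rw [extFrom_guard]
  show min z.2.2 (lsum φ (c :: l) z.2.1) ≤ lsum φ l z.2.1
  rw [lsum_cons, hc, zero_add]
  exact min_le_right _ _

lemma AA_stop {c : List ι} {l : List (List ι)} {z : E × C(I,B) × ℝ}
    (h : z.2.2 ≤ lsum φ l z.2.1) : AA φ LD (c :: l) z = AA φ LD l z := by
  show extFrom LD c.length c 0 _ = _
  rw [extFrom_guard]
  show min z.2.2 (lsum φ (c :: l) z.2.1) ≤ lsum φ l z.2.1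
  exact le_trans (min_le_left _ _) h

lemma AA_filter (l : List (List ι)) (z : E × C(I,B) × ℝ) :
    AA φ LD l z = AA φ LD (l.filter (fun c => mu φ c z.2.1 ≠ 0)) z := by
  induction l with
  | nil => rfl
  | cons c l ih =>
    by_cases hc : mu φ c z.2.1 ≠ 0
    · rw [List.filter_cons_of_pos (by simpa using hc)]
      exact AA_cons_congr φ LD ih (lsum_filter φ l z.2.1).symm
    · push_neg at hc
      rw [List.filter_cons_of_neg (by simpa using hc), AA_skip φ LD hc]
      exact ih

lemma AA_cwa (hsub : ∀ i, tsupport ⇑(φ i) ⊆ U i) {l : List (List ι)} (hl : l.Nodup)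
    {z₀ : E × C(I,B) × ℝ} (hz₀ : z₀ ∈ DD (p := p)) :
    ContinuousWithinAt (AA φ LD l) (DD (p := p)) z₀ := by
  classical
  induction l with
  | nil => exact continuous_fst.continuousWithinAt
  | cons c l ih =>
    have hlnd : l.Nodup := List.Nodup.of_cons hl
    have hIH := ih hlnd
    have hωcont : Continuous (fun z : E × C(I,B) × ℝ => z.2.1) :=
      continuous_fst.comp continuous_snd
    by_cases hA : z₀.2.1 ∈ closure {ω : C(I,B) | mu φ c ω ≠ 0}
    · -- boundary / support case: split into three regions
      have hctrl₀ : z₀.2.1 ∈ Ctrl φ c := closure_mu_subset_Ctrl φ c hA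
      set aF : (E × C(I,B) × ℝ) → ℝ := fun z => lsum φ l z.2.1 with haF
      have haFc : Continuous aF := (lsum_cont φ l).comp hωcont
      set S₁ : Set (E × C(I,B) × ℝ) := DD (p := p) ∩ {z | z.2.2 ≤ aF z} with hS₁
      set S₂ : Set (E × C(I,B) × ℝ) :=
        (DD (p := p) ∩ {z | aF z ≤ z.2.2}) ∩ {z | z.2.1 ∈ Ctrl φ c} with hS₂
      set S₃ : Set (E × C(I,B) × ℝ) :=
        (DD (p := p) ∩ {z | aF z ≤ z.2.2}) ∩ {z | z.2.1 ∉ Ctrl φ c} with hS₃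
      have hcover : DD (p := p) ⊆ (S₁ ∪ S₂) ∪ S₃ := by
        intro z hz
        rcases le_total z.2.2 (aF z) with h | h
        · exact Or.inl (Or.inl ⟨hz, h⟩)
        · by_cases hC : z.2.1 ∈ Ctrl φ c
          · exact Or.inl (Or.inr ⟨⟨hz, h⟩, hC⟩)
          · exact Or.inr ⟨⟨hz, h⟩, hC⟩
      have hcwa1 : ContinuousWithinAt (AA φ LD (c :: l)) S₁ z₀ := by
        by_cases hv : z₀.2.2 ≤ aF z₀
        · refine (hIH.mono (fun z hz => hz.1)).congr
            (fun z hz => AA_stop φ LD hz.2) (AA_stop φ LD hv)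
        · apply continuousWithinAt_of_notMem_closure
          intro hcl
          have hclosed : IsClosed {z : E × C(I,B) × ℝ | z.2.2 ≤ aF z} :=
            isClosed_le (continuous_snd.comp continuous_snd) haFc
          have : z₀ ∈ {z : E × C(I,B) × ℝ | z.2.2 ≤ aF z} :=
            closure_minimal (fun z hz => hz.2) hclosed hcl
          exact hv this
      have hmu_of_notctrl : ∀ ω : C(I,B), ω ∉ Ctrl φ c → mu φ c ω = 0 := by
        intro ω hω
        by_contra hne
        exact hω (ellpos_subset_Ctrl φ c (ell_pos_of_mu_ne_zero φ hne))
      have hcwa3 : ContinuousWithinAt (AA φ LD (c :: l)) S₃ z₀ := by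
        by_cases hmu₀ : mu φ c z₀.2.1 = 0
        · refine (hIH.mono (fun z hz => hz.1.1)).congr
            (fun z hz => AA_skip φ LD (hmu_of_notctrl _ hz.2)) (AA_skip φ LD hmu₀)
        · apply continuousWithinAt_of_notMem_closure
          intro hcl
          have hclosed : IsClosed {z : E × C(I,B) × ℝ | mu φ c z.2.1 = 0} :=
            isClosed_eq ((mu_cont φ c).comp hωcont) continuous_const
          have : z₀ ∈ {z : E × C(I,B) × ℝ | mu φ c z.2.1 = 0} :=
            closure_minimal (fun z hz => hmu_of_notctrl _ hz.2) hclosed hcl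
          exact hmu₀ this
      have hcwa2 : ContinuousWithinAt (AA φ LD (c :: l)) S₂ z₀ := by
        by_cases hv2 : aF z₀ ≤ z₀.2.2
        · -- compose with `extFrom`
          set Θ : (E × C(I,B) × ℝ) → E × C(I,B) × ℝ × ℝ := fun z =>
            (AA φ LD l z, z.2.1, lsum φ l z.2.1, min z.2.2 (lsum φ (c :: l) z.2.1)) with hΘ
          have hmem : ∀ z ∈ S₂, Θ z ∈ GE (p := p) φ c.length c 0 := by
            rintro z ⟨⟨hzD, hzv⟩, hzC⟩
            refine mem_GE_of_Ctrl φ hzC (lsum_nonneg φ l z.2.1) (lsum_le_one φ hlnd z.2.1)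
              (le_trans (min_le_left _ _) hzD.2.2) ?_
            rw [AA_proj φ LD hsub hlnd hzD, min_eq_right hzv]
          have hmemz₀ : Θ z₀ ∈ GE (p := p) φ c.length c 0 := by
            refine mem_GE_of_Ctrl φ hctrl₀ (lsum_nonneg φ l z₀.2.1) (lsum_le_one φ hlnd z₀.2.1)
              (le_trans (min_le_left _ _) hz₀.2.2) ?_
            rw [AA_proj φ LD hsub hlnd hz₀, min_eq_right hv2]
          have hΘcwa : ContinuousWithinAt Θ S₂ z₀ := by
            refine ContinuousWithinAt.prodMk (hIH.mono (fun z hz => hz.1.1)) ?_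
            refine ContinuousWithinAt.prodMk hωcont.continuousWithinAt ?_
            refine ContinuousWithinAt.prodMk haFc.continuousWithinAt ?_
            exact ((continuous_snd.comp continuous_snd).min
              ((lsum_cont φ (c :: l)).comp hωcont)).continuousWithinAt
          exact ContinuousWithinAt.comp (g := extFrom LD c.length c 0) (f := Θ)
            (s := S₂) (t := GE (p := p) φ c.length c 0)
            (extFrom_cwa LD hsub c 0 hmemz₀) hΘcwa hmem
        · apply continuousWithinAt_of_notMem_closure
          intro hcl
          have hclosed : IsClosed {z : E × C(I,B) × ℝ | aF z ≤ z.2.2} :=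
            isClosed_le haFc (continuous_snd.comp continuous_snd)
          have : z₀ ∈ {z : E × C(I,B) × ℝ | aF z ≤ z.2.2} :=
            closure_minimal (fun z hz => hz.1.2) hclosed hcl
          exact hv2 this
      exact ((hcwa1.union hcwa2).union hcwa3).mono hcover
    · -- away from the support of `mu c`: the step is locally a no-op
      have hop : IsOpen (closure {ω : C(I,B) | mu φ c ω ≠ 0})ᶜ := isClosed_closure.isOpen_compl
      have hev : ∀ᶠ z in 𝓝 z₀, mu φ c z.2.1 = 0 := by
        filter_upwards [(hop.preimage hωcont).mem_nhds hA] with z hz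
        by_contra hne
        exact hz (subset_closure hne)
      have hev2 : ∀ᶠ z in 𝓝[DD (p := p)] z₀, AA φ LD (c :: l) z = AA φ LD l z :=
        (hev.mono fun z hz => AA_skip φ LD hz).filter_mono nhdsWithin_le_nhds
      have hmu₀ : mu φ c z₀.2.1 = 0 := by
        by_contra hne
        exact hA (subset_closure hne)
      exact hIH.congr_of_eventuallyEq hev2 (AA_skip φ LD hmu₀)

section Canon

variable [LinearOrder ι]

/-- the set of active tuples of a path. -/
def activeSet (ω : C(I,B)) : Set (List ι) := {c | mu φ c ω ≠ 0}

lemma activeSet_finite (ω : C(I,B)) : (activeSet φ ω).Finite := by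
  obtain ⟨N, -, hωN, F, hF⟩ := mu_localfin φ ω
  exact F.finite_toSet.subset fun c hc => hF ω hωN c hc

/-- the canonical (sorted) list of active tuples. -/
def canon (ω : C(I,B)) : List (List ι) :=
  Finset.sort (activeSet_finite φ ω).toFinset (· ≤ ·)

lemma canon_nodup (ω : C(I,B)) : (canon φ ω).Nodup := Finset.sort_nodup _ _

lemma mem_canon {ω : C(I,B)} {c : List ι} : c ∈ canon φ ω ↔ mu φ c ω ≠ 0 := by
  rw [canon, Finset.mem_sort, Set.Finite.mem_toFinset]
  rfl

lemma lsum_canon (ω : C(I,B)) : lsum φ (canon φ ω) ω = 1 := by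
  classical
  rw [lsum, ← List.sum_toFinset _ (canon_nodup φ ω)]
  have h1 : (canon φ ω).toFinset = (activeSet_finite φ ω).toFinset := by
    rw [canon, Finset.sort_toFinset]
  rw [h1, ← mu_tsum_one φ ω]
  exact (tsum_eq_sum (fun c hc => by
    by_contra hne
    exact hc ((Set.Finite.mem_toFinset _).mpr hne))).symm

/-- the global lifting function. -/
def GG (z : E × C(I,B) × ℝ) : E := AA φ LD (canon φ z.2.1) z

lemma GG_zero {z : E × C(I,B) × ℝ} (hv : z.2.2 ≤ 0) : GG φ LD z = z.1 :=
  AA_guard φ LD _ hv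

lemma GG_proj (hsub : ∀ i, tsupport ⇑(φ i) ⊆ U i) {z : E × C(I,B) × ℝ}
    (hz : z ∈ DD (p := p)) : p (GG φ LD z) = z.2.1 (prj z.2.2) := by
  rw [GG, AA_proj φ LD hsub (canon_nodup φ z.2.1) hz, lsum_canon φ z.2.1,
    min_eq_left hz.2.2]

lemma GG_cwa (hsub : ∀ i, tsupport ⇑(φ i) ⊆ U i) {z₀ : E × C(I,B) × ℝ}
    (hz₀ : z₀ ∈ DD (p := p)) :
    ContinuousWithinAt (GG φ LD) (DD (p := p)) z₀ := by
  classical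
  obtain ⟨N, hNo, hωN, F, hF⟩ := mu_localfin φ z₀.2.1
  set Ls : List (List ι) := Finset.sort F (· ≤ ·) with hLs
  have key : ∀ z : E × C(I,B) × ℝ, z.2.1 ∈ N → GG φ LD z = AA φ LD Ls z := by
    intro z hzN
    have hlists : (Ls.filter (fun c => mu φ c z.2.1 ≠ 0)) = canon φ z.2.1 := by
      refine (fun hperm h1 h2 => List.Perm.eq_of_pairwise' (r := (· ≤ · : List ι → List ι → Prop)) h1 h2 hperm) ?_ ?_ ?_
      · apply List.perm_of_nodup_nodup_toFinset_eq
          ((Finset.sort_nodup _ _).filter _) (canon_nodup φ z.2.1)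
        ext c
        simp only [List.mem_toFinset, List.mem_filter, Finset.mem_sort, mem_canon,
          decide_eq_true_eq]
        constructor
        · rintro ⟨-, h2⟩; exact h2
        · intro h; exact ⟨hF z.2.1 hzN c h, h⟩
      · exact List.Pairwise.filter _ (Finset.pairwise_sort _ _)
      · exact Finset.pairwise_sort _ _
    rw [GG, ← hlists]
    exact (AA_filter φ LD Ls z).symm
  have hev : ∀ᶠ z in 𝓝[DD (p := p)] z₀, GG φ LD z = AA φ LD Ls z := by
    have hωcont : Continuous (fun z : E × C(I,B) × ℝ => z.2.1) :=
      continuous_fst.comp continuous_snd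
    refine Filter.Eventually.filter_mono nhdsWithin_le_nhds ?_
    filter_upwards [(hNo.preimage hωcont).mem_nhds hωN] with z hz
    exact key z hz
  exact (AA_cwa φ LD hsub (Finset.sort_nodup _ _) hz₀).congr_of_eventuallyEq hev
    (key z₀ hωN)

end Canon

end Assemble

end HPF

/-- A locally trivial fibration over a paracompact (Hausdorff) base is a Hurewicz
fibration: it has the homotopy lifting property with respect to all topological
spaces. -/
theorem hurewicz_of_locallyTrivial_paracompact
    {E B : Type u} [TopologicalSpace E] [TopologicalSpace B]
    [ParacompactSpace B] [T2Space B] (p : C(E, B))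
    (hloc : ∀ x : B, ∃ U : Set B, IsOpen U ∧ x ∈ U ∧
      ∃ (F : TopCat.{u}) (e : {y : E // p y ∈ U} ≃ₜ U × F),
        ∀ y : {y : E // p y ∈ U}, ((e y).1 : B) = p y.1) :
    Paper.IsHurewiczFibration ⇑p := by
  classical
  intro A _inst H g hg
  choose Uu hUopen hUmem Ff ee hee using hloc
  letI : LinearOrder B := IsWellOrder.linearOrder WellOrderingRel
  obtain ⟨φ, hφ⟩ := PartitionOfUnity.exists_isSubordinate (ι := B) isClosed_univ Uu hUopen
    (fun b _ => Set.mem_iUnion.mpr ⟨b, hUmem b⟩)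
  set LD : ∀ x : B, HPF.LiftData p (Uu x) :=
    fun x => HPF.LiftData.ofTriv p (Uu x) (Ff x) (ee x) (hee x) with hLD
  have hsub : ∀ i, tsupport ⇑(φ i) ⊆ Uu i := hφ
  set ωf : C(A, C(I,B)) := ContinuousMap.curry H with hωf
  set θ : A × I → (E × C(I,B) × ℝ) := fun q => (g q.1, ωf q.1, (q.2 : ℝ)) with hθ
  have hθc : Continuous θ := by
    refine ((map_continuous g).comp continuous_fst).prodMk
      (((map_continuous ωf).comp continuous_fst).prodMk
        (continuous_subtype_val.comp continuous_snd))
  have hθmaps : ∀ q : A × I, θ q ∈ HPF.DD (p := p) := by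
    intro q
    refine ⟨?_, q.2.2.1, q.2.2.2⟩
    show p (g q.1) = ωf q.1 0
    rw [hg q.1]
    rfl
  have hGGon : ContinuousOn (HPF.GG φ LD) (HPF.DD (p := p)) :=
    fun z hz => HPF.GG_cwa φ LD hsub hz
  refine ⟨⟨fun q => HPF.GG φ LD (θ q), hGGon.comp_continuous hθc hθmaps⟩, ?_, ?_⟩
  · intro a
    show HPF.GG φ LD (θ (a, 0)) = g a
    rw [HPF.GG_zero φ LD (by simp [hθ] : ((θ (a, (0:I))).2.2 : ℝ) ≤ 0)]
  · rintro ⟨a, t⟩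
    show p (HPF.GG φ LD (θ (a, t))) = H (a, t)
    rw [HPF.GG_proj φ LD hsub (hθmaps (a, t))]
    have hp : HPF.prj ((t : I) : ℝ) = t := Subtype.ext (HPF.prj_of_mem t.2.1 t.2.2)
    show ωf a (HPF.prj ((t : I) : ℝ)) = H (a, t)
    rw [hp]
    rfl
end
end

section
/- Let W be a topological space and consider a cospan X → Z ← Y in the category of spaces over W, where the structure maps Y → W and Z → W are Hurewicz fibrations. Then the inclusion of the fiberwise homotopy pullback (triples (x,p,y) where the path p in Z lies over a constant path in W) into the ordinary homotopy pullback (all triples (x,p,y)) is a weak homotopy equivalence. -/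
open ContinuousMap Topology unitInterval

universe u

open Paper unitInterval

noncomputable section FibAux

/-- sup-distance (scaled) from the center of the cube. -/
def cm {N : ℕ} (x : Fin N → I) : ℝ := ‖fun i => 2 * (x i : ℝ) - 1‖

lemma cm_nonneg {N : ℕ} (x : Fin N → I) : 0 ≤ cm x := norm_nonneg _

lemma abs_coord_le_one {N : ℕ} (x : Fin N → I) (i : Fin N) : |2 * (x i : ℝ) - 1| ≤ 1 := by
  rw [abs_le]; constructor <;> nlinarith [(x i).2.1, (x i).2.2]

lemma coord_le_cm {N : ℕ} (x : Fin N → I) (i : Fin N) : |2 * (x i : ℝ) - 1| ≤ cm x := by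
  rw [cm]; simpa using norm_le_pi_norm (fun i => 2 * (x i : ℝ) - 1) i

lemma cm_le_one {N : ℕ} (x : Fin N → I) : cm x ≤ 1 := by
  refine (pi_norm_le_iff_of_nonneg zero_le_one).2 fun i => ?_
  simpa using abs_coord_le_one x i

lemma cm_continuous {N : ℕ} : Continuous fun x : Fin N → I => cm x := by
  apply continuous_norm.comp
  exact continuous_pi fun i => by continuity

lemma mem_boundary_iff_cm {N : ℕ} (x : Fin N → I) :
    x ∈ Cube.boundary (Fin N) ↔ cm x = 1 := by
  constructor
  · rintro ⟨i, hi | hi⟩ <;>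
    · refine le_antisymm (cm_le_one x) ?_
      have h2 := coord_le_cm x i
      rw [hi] at h2
      norm_num at h2
      linarith
  · intro h
    by_contra hb
    have hlt : ∀ i, |2 * (x i : ℝ) - 1| < 1 := by
      intro i
      rcases lt_or_eq_of_le (abs_coord_le_one x i) with h1 | h1
      · exact h1
      · exfalso; apply hb
        rw [abs_eq (by norm_num : (0:ℝ) ≤ 1)] at h1
        rcases h1 with h1 | h1
        · refine ⟨i, Or.inr (Subtype.ext ?_)⟩
          show (x i : ℝ) = ((1:I) : ℝ)
          have hc : ((1:I):ℝ) = 1 := rfl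
          rw [hc]; linarith
        · refine ⟨i, Or.inl (Subtype.ext ?_)⟩
          show (x i : ℝ) = ((0:I) : ℝ)
          have hc : ((0:I):ℝ) = 0 := rfl
          rw [hc]; linarith
    have hcl : cm x < 1 := by
      have h3 := pi_norm_lt_iff (by norm_num : (0:ℝ) < 1) (x := fun i : Fin N => 2 * (x i : ℝ) - 1)
      rw [cm, h3]
      intro i; simpa using hlt i
    rw [h] at hcl; exact lt_irrefl _ hcl

/-- scaling of the cube around its center by factor `a`, clamped into the cube. -/
def sc {N : ℕ} (a : ℝ) (x : Fin N → I) : Fin N → I :=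
  fun i => Set.projIcc 0 1 zero_le_one ((1 + a * (2 * (x i : ℝ) - 1)) / 2)

lemma sc_coord {N : ℕ} {a : ℝ} (ha : 0 ≤ a) {x : Fin N → I} (h : a * cm x ≤ 1) (i : Fin N) :
    (sc a x i : ℝ) = (1 + a * (2 * (x i : ℝ) - 1)) / 2 := by
  have h1 : |a * (2 * (x i : ℝ) - 1)| ≤ 1 := by
    rw [abs_mul, abs_of_nonneg ha]
    calc a * |2 * (x i : ℝ) - 1| ≤ a * cm x :=
          mul_le_mul_of_nonneg_left (coord_le_cm x i) ha
      _ ≤ 1 := h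
  rw [abs_le] at h1
  exact congrArg Subtype.val
    (Set.projIcc_of_mem zero_le_one ⟨by linarith [h1.1], by linarith [h1.2]⟩)

lemma sc_center_coord {N : ℕ} {a : ℝ} (ha : 0 ≤ a) {x : Fin N → I} (h : a * cm x ≤ 1) (i : Fin N) :
    2 * (sc a x i : ℝ) - 1 = a * (2 * (x i : ℝ) - 1) := by
  rw [sc_coord ha h i]; ring

lemma cm_sc {N : ℕ} {a : ℝ} (ha : 0 ≤ a) {x : Fin N → I} (h : a * cm x ≤ 1) :
    cm (sc a x) = a * cm x := by
  have he : (fun i => 2 * ((sc a x) i : ℝ) - 1) = a • (fun i => 2 * (x i : ℝ) - 1) := by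
    funext i; simpa using sc_center_coord ha h i
  rw [cm, he, norm_smul, Real.norm_eq_abs, abs_of_nonneg ha]; rfl

lemma sc_one {N : ℕ} (x : Fin N → I) : sc 1 x = x := by
  funext i
  apply Subtype.ext
  have h2 := sc_coord zero_le_one (by simpa using cm_le_one x) (x := x) i
  rw [h2]; ring

lemma sc_sc {N : ℕ} {a c : ℝ} (ha : 0 ≤ a) (hc : 0 ≤ c) {x : Fin N → I}
    (h : a * cm x ≤ 1) (h2 : c * (a * cm x) ≤ 1) :
    sc c (sc a x) = sc (c * a) x := by
  have hcm : c * cm (sc a x) ≤ 1 := by rw [cm_sc ha h]; exact h2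
  funext i
  apply Subtype.ext
  rw [sc_coord hc hcm i, sc_coord (mul_nonneg hc ha) (by rw [mul_assoc]; exact h2) i,
    sc_center_coord ha h i]
  ring

lemma sc_continuous {N : ℕ} : Continuous fun p : ℝ × (Fin N → I) => sc p.1 p.2 := by
  apply continuous_pi
  intro i
  apply continuous_projIcc.comp
  have hco : Continuous fun p : ℝ × (Fin N → I) => (p.2 i : ℝ) :=
    continuous_subtype_val.comp ((continuous_apply i).comp continuous_snd)
  exact ((continuous_const.add (continuous_fst.mul
    ((continuous_const.mul hco).sub continuous_const))).div_const 2)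

end FibAux

noncomputable section FibPhiPsi
open Set

/-- clamp a real into the unit interval -/
def tpr (r : ℝ) : I := Set.projIcc 0 1 zero_le_one r

lemma tpr_coe {r : ℝ} (h0 : 0 ≤ r) (h1 : r ≤ 1) : (tpr r : ℝ) = r :=
  congrArg Subtype.val (Set.projIcc_of_mem zero_le_one ⟨h0, h1⟩)

lemma tpr_continuous : Continuous tpr := continuous_projIcc (h := zero_le_one)

/-- The subset `(cube × {0}) ∪ (∂cube × I)` of the cylinder over the `N`-cube. -/
def LSet (N : ℕ) : Set ((Fin N → I) × I) :=
  {q | q.2 = 0 ∨ q.1 ∈ Cube.boundary (Fin N)}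

/-- A continuous self-map of the cylinder carrying the bottom onto `LSet`. -/
def phiMap {N : ℕ} (q : (Fin N → I) × I) : (Fin N → I) × I :=
  if cm q.1 ≤ 1/2 then (sc (2 - 3 * (q.2 : ℝ) / 2) q.1, q.2)
  else if (q.2 : ℝ) ≤ 2 * cm q.1 - 1 then
    (sc ((1 - (q.2 : ℝ)/2) / max (cm q.1) (1/2)) q.1, tpr (2 * cm q.1 - 1))
  else (sc ((cm q.1 / 2 - 3 * (q.2 : ℝ)/4 + 3/4) / max (cm q.1) (1/2)) q.1, q.2)

/-- A continuous section of `phiMap` carrying `LSet` into the bottom. -/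
def psiMap {N : ℕ} (q : (Fin N → I) × I) : (Fin N → I) × I :=
  if 2 - 2 * cm q.1 ≤ (q.2 : ℝ) then
    (sc (((q.2 : ℝ) + 1) / (2 * max (cm q.1) (1/2))) q.1, tpr (2 - 2 * cm q.1))
  else if 1 - 3 * (q.2 : ℝ)/4 ≤ cm q.1 then
    (sc ((2 * cm q.1 + 3 * (q.2 : ℝ)/2 - 3/2) / max (cm q.1) (1/4)) q.1, q.2)
  else (sc (1 / (2 - 3 * (q.2 : ℝ)/2)) q.1, q.2)

end FibPhiPsi

noncomputable section FibPhiPsiCont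

lemma cont_coe2 {N : ℕ} : Continuous fun q : (Fin N → I) × I => (q.2 : ℝ) :=
  continuous_subtype_val.comp continuous_snd

lemma cont_cm1 {N : ℕ} : Continuous fun q : (Fin N → I) × I => cm q.1 :=
  cm_continuous.comp continuous_fst

lemma cont_scq {N : ℕ} {a : ((Fin N → I) × I) → ℝ} (ha : Continuous a) :
    Continuous fun q : (Fin N → I) × I => sc (a q) q.1 :=
  sc_continuous.comp (ha.prodMk continuous_fst)

lemma phiMap_continuous {N : ℕ} : Continuous (phiMap (N := N)) := by
  unfold phiMap
  have hmax : Continuous fun q : (Fin N → I) × I => max (cm q.1) (1/2) :=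
    cont_cm1.max continuous_const
  have hmaxne : ∀ q : (Fin N → I) × I, max (cm q.1) (1/2) ≠ 0 := fun q => by positivity
  apply Continuous.if_le
  · exact (cont_scq ((continuous_const.sub ((continuous_const.mul cont_coe2).div_const 2)))).prodMk
      continuous_snd
  · apply Continuous.if_le
    · refine (cont_scq ?_).prodMk
        (tpr_continuous.comp ((continuous_const.mul cont_cm1).sub continuous_const))
      exact (continuous_const.sub (cont_coe2.div_const 2)).div hmax hmaxne
    · refine (cont_scq ?_).prodMk continuous_snd
      have hnum : Continuous fun q : (Fin N → I) × I =>
          cm q.1 / 2 - 3 * (q.2 : ℝ)/4 + 3/4 :=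
        ((cont_cm1.div_const 2).sub ((continuous_const.mul cont_coe2).div_const 4)).add
          continuous_const
      exact hnum.div hmax hmaxne
    · exact cont_coe2
    · exact (continuous_const.mul cont_cm1).sub continuous_const
    · -- inner agreement at t = 2m-1
      intro q hq
      have hm : cm q.1 = ((q.2 : ℝ) + 1)/2 := by linarith
      refine Prod.ext ?_ ?_
      · show sc _ q.1 = sc _ q.1
        congr 1
        rw [hm]; ring
      · show tpr (2 * cm q.1 - 1) = q.2
        apply Subtype.ext
        rw [← hq]
        exact tpr_coe q.2.2.1 q.2.2.2
  · exact cont_cm1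
  · exact continuous_const
  · -- outer agreement at m = 1/2
    intro q hq
    have h2 : max (cm q.1) (1/2:ℝ) = 1/2 := by rw [hq]; exact max_self _
    by_cases ht : (q.2 : ℝ) ≤ 2 * cm q.1 - 1
    · rw [if_pos ht]
      have ht0 : (q.2 : ℝ) = 0 := le_antisymm (by rw [hq] at ht; linarith) q.2.2.1
      refine Prod.ext ?_ ?_
      · show sc _ q.1 = sc _ q.1
        congr 1
        rw [h2, ht0]; norm_num
      · show q.2 = tpr (2 * cm q.1 - 1)
        have h3 : (2:ℝ) * cm q.1 - 1 = 0 := by rw [hq]; ring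
        apply Subtype.ext
        rw [h3, ht0]
        symm
        exact tpr_coe le_rfl zero_le_one
    · rw [if_neg ht]
      refine Prod.ext ?_ rfl
      show sc _ q.1 = sc _ q.1
      congr 1
      rw [h2, hq]; ring

lemma psiMap_continuous {N : ℕ} : Continuous (psiMap (N := N)) := by
  unfold psiMap
  have hmax2 : Continuous fun q : (Fin N → I) × I => 2 * max (cm q.1) (1/2) :=
    continuous_const.mul (cont_cm1.max continuous_const)
  have hmax2ne : ∀ q : (Fin N → I) × I, 2 * max (cm q.1) (1/2) ≠ 0 := fun q => by positivity
  have hmax4 : Continuous fun q : (Fin N → I) × I => max (cm q.1) (1/4) :=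
    cont_cm1.max continuous_const
  have hmax4ne : ∀ q : (Fin N → I) × I, max (cm q.1) (1/4) ≠ 0 := fun q => by positivity
  have hden : Continuous fun q : (Fin N → I) × I => 2 - 3 * (q.2 : ℝ)/2 :=
    continuous_const.sub ((continuous_const.mul cont_coe2).div_const 2)
  have hdenne : ∀ q : (Fin N → I) × I, 2 - 3 * (q.2 : ℝ)/2 ≠ 0 := fun q => by
    have := q.2.2.2; nlinarith [q.2.2.1]
  apply Continuous.if_le
  · exact (cont_scq ((cont_coe2.add continuous_const).div hmax2 hmax2ne)).prodMk
      (tpr_continuous.comp (continuous_const.sub (continuous_const.mul cont_cm1)))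
  · apply Continuous.if_le
    · refine (cont_scq ?_).prodMk continuous_snd
      have hnum : Continuous fun q : (Fin N → I) × I =>
          2 * cm q.1 + 3 * (q.2 : ℝ)/2 - 3/2 :=
        ((continuous_const.mul cont_cm1).add
          ((continuous_const.mul cont_coe2).div_const 2)).sub continuous_const
      exact hnum.div hmax4 hmax4ne
    · exact (cont_scq (continuous_const.div hden hdenne)).prodMk continuous_snd
    · exact continuous_const.sub ((continuous_const.mul cont_coe2).div_const 4)
    · exact cont_cm1
    · -- inner agreement at μ = 1 - 3v/4
      intro q hq
      refine Prod.ext ?_ rfl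
      have hv : (q.2 : ℝ) ≤ 1 := q.2.2.2
      have hμ4 : max (cm q.1) (1/4 : ℝ) = cm q.1 := max_eq_left (by linarith)
      have e : (2 * cm q.1 + 3 * (q.2:ℝ)/2 - 3/2) / max (cm q.1) (1/4)
          = 1 / (2 - 3 * (q.2:ℝ)/2) := by
        rw [hμ4, ← hq]
        have h4 : (0:ℝ) < 1 - 3 * (q.2:ℝ)/4 := by linarith
        have h5 : (0:ℝ) < 2 - 3 * (q.2:ℝ)/2 := by linarith
        rw [div_eq_div_iff (by linarith) (by linarith)]
        ring
      show sc _ q.1 = sc _ q.1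
      rw [e]
  · exact continuous_const.sub (continuous_const.mul cont_cm1)
  · exact cont_coe2
  · -- outer agreement at v = 2 - 2μ
    intro q hq
    have hv1 : (q.2 : ℝ) ≤ 1 := q.2.2.2
    have hμ : (1/2 : ℝ) ≤ cm q.1 := by linarith
    have hmaxeq : max (cm q.1) (1/2 : ℝ) = cm q.1 := max_eq_left hμ
    have hcm1 : cm q.1 ≤ 1 := cm_le_one q.1
    have hin : 1 - 3 * (q.2 : ℝ)/4 ≤ cm q.1 := by linarith
    rw [if_pos hin]
    have hμ4 : max (cm q.1) (1/4 : ℝ) = cm q.1 := max_eq_left (by linarith)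
    refine Prod.ext ?_ ?_
    · have hμ0 : cm q.1 ≠ 0 := by linarith
      have e : ((q.2:ℝ) + 1) / (2 * max (cm q.1) (1/2))
          = (2 * cm q.1 + 3 * (q.2:ℝ)/2 - 3/2) / max (cm q.1) (1/4) := by
        rw [hmaxeq, hμ4, ← hq]
        field_simp
        ring
      show sc _ q.1 = sc _ q.1
      rw [e]
    · show tpr (2 - 2 * cm q.1) = q.2
      apply Subtype.ext
      rw [← hq]
      exact tpr_coe (by linarith) (by linarith)

end FibPhiPsiCont

noncomputable section FibPhiPsiKey

lemma tpr_nonpos {r : ℝ} (h : r ≤ 0) : tpr r = 0 := by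
  apply Subtype.ext
  have := Set.projIcc_of_le_left (zero_le_one' ℝ) h
  rw [tpr, this]
  rfl

lemma phiMap_bottom {N : ℕ} (x : Fin N → I) : phiMap (x, (0:I)) ∈ LSet N := by
  unfold phiMap
  by_cases hm : cm x ≤ 1/2
  · rw [if_pos hm]
    exact Or.inl rfl
  · rw [if_neg hm]
    push_neg at hm
    have h0 : ((0:I):ℝ) = 0 := rfl
    have hc : ((0:I):ℝ) ≤ 2 * cm x - 1 := by rw [h0]; linarith
    rw [if_pos hc]
    right
    rw [mem_boundary_iff_cm]
    have hmax : max (cm x) (1/2:ℝ) = cm x := max_eq_left (by linarith)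
    have ha : (0:ℝ) ≤ (1 - ((0:I):ℝ)/2) / max (cm x) (1/2) := by
      rw [h0, hmax]; positivity
    have hb : ((1 - ((0:I):ℝ)/2) / max (cm x) (1/2)) * cm x = 1 := by
      rw [h0, hmax]; field_simp; norm_num
    rw [cm_sc ha (le_of_eq hb), hb]

lemma psiMap_L {N : ℕ} {q : (Fin N → I) × I} (h : q ∈ LSet N) : (psiMap q).2 = 0 := by
  unfold psiMap
  rcases h with h | h
  · by_cases hb : 2 - 2 * cm q.1 ≤ (q.2 : ℝ)
    · rw [if_pos hb]
      have hv : (q.2:ℝ) = 0 := by rw [h]; rfl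
      exact tpr_nonpos (by linarith [hv ▸ hb])
    · rw [if_neg hb]
      by_cases hb2 : 1 - 3 * (q.2 : ℝ)/4 ≤ cm q.1
      · rw [if_pos hb2]; exact h
      · rw [if_neg hb2]; exact h
  · rw [mem_boundary_iff_cm] at h
    have hb : 2 - 2 * cm q.1 ≤ (q.2 : ℝ) := by rw [h]; simpa using q.2.2.1
    rw [if_pos hb]
    exact tpr_nonpos (by rw [h]; norm_num)

set_option maxHeartbeats 1000000 in
lemma phi_psi {N : ℕ} (q : (Fin N → I) × I) : phiMap (psiMap q) = q := by
  set v : ℝ := (q.2 : ℝ) with hv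
  have hv0 : 0 ≤ v := q.2.2.1
  have hv1 : v ≤ 1 := q.2.2.2
  set μ : ℝ := cm q.1 with hμ
  have hμ0 : 0 ≤ μ := cm_nonneg q.1
  have hμ1 : μ ≤ 1 := cm_le_one q.1
  unfold psiMap
  rw [← hv, ← hμ]
  by_cases hb1 : 2 - 2 * μ ≤ v
  · rw [if_pos hb1]
    have hμh : (1/2:ℝ) ≤ μ := by linarith
    have hμpos : (0:ℝ) < μ := by linarith
    have hmax : max μ (1/2:ℝ) = μ := max_eq_left hμh
    rw [hmax]
    set a : ℝ := (v + 1) / (2 * μ) with ha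
    have ha0 : 0 ≤ a := by positivity
    have haμ : a * μ = (v + 1)/2 := by rw [ha]; field_simp
    have haμ1 : a * μ ≤ 1 := by rw [haμ]; linarith
    have hcm1 : cm (sc a q.1) = (v + 1)/2 := by rw [cm_sc ha0 haμ1, ← hμ, haμ]
    have ht1 : ((tpr (2 - 2*μ)) : ℝ) = 2 - 2*μ := tpr_coe (by linarith) (by linarith)
    unfold phiMap
    rw [hcm1, ht1]
    by_cases hv' : v ≤ 0
    · have hv'' : v = 0 := le_antisymm hv' hv0
      have hμ1' : μ = 1 := by linarith
      rw [if_pos (by rw [hv'']; norm_num : (v+1)/2 ≤ (1:ℝ)/2)]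
      refine Prod.ext ?_ ?_
      · show sc (2 - 3 * (2 - 2*μ) / 2) (sc a q.1) = q.1
        have e : 2 - 3 * (2 - 2*μ) / 2 = 2 := by rw [hμ1']; ring
        rw [e, sc_sc ha0 (by norm_num) haμ1 (by rw [haμ, hv'']; norm_num)]
        have e2 : 2 * a = 1 := by rw [ha, hμ1', hv'']; norm_num
        rw [e2, sc_one]
      · show tpr (2 - 2*μ) = q.2
        apply Subtype.ext
        rw [ht1, hμ1', ← hv, hv'']
        norm_num
    · push_neg at hv'
      rw [if_neg (by intro hcon; linarith : ¬ ((v+1)/2 ≤ (1:ℝ)/2))]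
      rw [if_pos (by linarith : 2 - 2*μ ≤ 2 * ((v+1)/2) - 1)]
      have hmax2 : max ((v+1)/2) (1/2:ℝ) = (v+1)/2 := max_eq_left (by linarith)
      refine Prod.ext ?_ ?_
      · show sc ((1 - (2 - 2*μ)/2) / max ((v+1)/2) (1/2)) (sc a q.1) = q.1
        rw [hmax2]
        have e1 : (1 - (2 - 2*μ)/2) / ((v+1)/2) = 2*μ/(v+1) := by
          rw [div_eq_div_iff (by linarith) (by linarith)]; ring
        rw [e1]
        have hc0 : (0:ℝ) ≤ 2*μ/(v+1) := by positivity
        rw [sc_sc ha0 hc0 haμ1 (by rw [haμ, div_mul_eq_mul_div, div_le_one (by linarith)]; nlinarith)]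
        have e2 : 2*μ/(v+1) * a = 1 := by rw [ha]; field_simp
        rw [e2, sc_one]
      · show tpr (2 * ((v+1)/2) - 1) = q.2
        apply Subtype.ext
        have e3 : 2 * ((v+1)/2) - 1 = v := by ring
        rw [e3, hv]
        exact tpr_coe hv0 hv1
  · rw [if_neg hb1]
    push_neg at hb1
    by_cases hb2 : 1 - 3 * v/4 ≤ μ
    · rw [if_pos hb2]
      have hμq : (1/4:ℝ) ≤ μ := by linarith
      have hμpos : (0:ℝ) < μ := by linarith
      have hmax : max μ (1/4:ℝ) = μ := max_eq_left hμq
      rw [hmax]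
      set a : ℝ := (2*μ + 3*v/2 - 3/2) / μ with ha
      have hm' : a * μ = 2*μ + 3*v/2 - 3/2 := by
        rw [ha, div_mul_cancel₀ _ (ne_of_gt hμpos)]
      have hm'h : (1/2:ℝ) ≤ a * μ := by rw [hm']; linarith
      have hm'1 : a * μ < 1 := by rw [hm']; linarith
      have ha0 : 0 ≤ a := by
        apply div_nonneg (by linarith) (by linarith)
      have hcm1 : cm (sc a q.1) = 2*μ + 3*v/2 - 3/2 := by
        rw [cm_sc ha0 (le_of_lt hm'1), ← hμ, hm']
      unfold phiMap
      rw [hcm1]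
      by_cases heq : 2*μ + 3*v/2 - 3/2 ≤ (1:ℝ)/2
      · -- m' = 1/2, μ = 1 - 3v/4
        have hμe : μ = 1 - 3*v/4 := by linarith [hm'h, hm' ▸ hm'h]
        rw [if_pos heq]
        refine Prod.ext ?_ rfl
        show sc _ (sc a q.1) = q.1
        have hden : (0:ℝ) < 2 - 3*v/2 := by linarith
        have hc0 : (0:ℝ) ≤ 2 - 3*v/2 := le_of_lt hden
        rw [sc_sc ha0 hc0 (le_of_lt hm'1) (by rw [hm']; nlinarith)]
        have e2 : (2 - 3*v/2) * a = 1 := by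
          have hnum2 : 2*μ + 3*v/2 - 3/2 = 1/2 := by rw [hμe]; ring
          rw [ha, hnum2, hμe, ← mul_div_assoc,
            div_eq_one_iff_eq (ne_of_gt (by linarith : (0:ℝ) < 1 - 3*v/4))]
          ring
        rw [e2, sc_one]
      · rw [if_neg heq]
        rw [if_neg (by push_neg; linarith : ¬ (v ≤ 2 * (2*μ + 3*v/2 - 3/2) - 1))]
        refine Prod.ext ?_ rfl
        show sc _ (sc a q.1) = q.1
        push_neg at heq
        have hmax3 : max (2*μ + 3*v/2 - 3/2) (1/2:ℝ) = 2*μ + 3*v/2 - 3/2 :=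
          max_eq_left (by linarith)
        have hnum : (2*μ + 3*v/2 - 3/2)/2 - 3*v/4 + 3/4 = μ := by ring
        have hc0 : (0:ℝ) ≤ ((2*μ + 3*v/2 - 3/2)/2 - 3*v/4 + 3/4) / max (2*μ + 3*v/2 - 3/2) (1/2) := by
          rw [hmax3, hnum]; positivity
        rw [sc_sc ha0 hc0 (le_of_lt hm'1) (by rw [hm', hmax3, hnum]; rw [div_mul_eq_mul_div, div_le_one (by linarith)]; nlinarith)]
        have e2 : (((2*μ + 3*v/2 - 3/2)/2 - 3*v/4 + 3/4) / max (2*μ + 3*v/2 - 3/2) (1/2)) * a = 1 := by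
          rw [hmax3, hnum, ha]; field_simp
          have hpos2 : (0:ℝ) < 2*μ*2 + 3*v - 3 := by linarith
          exact div_self (ne_of_gt (by nlinarith))
        rw [e2, sc_one]
    · rw [if_neg hb2]
      push_neg at hb2
      have hden : (0:ℝ) < 2 - 3*v/2 := by nlinarith
      set a : ℝ := 1 / (2 - 3*v/2) with ha
      have ha0 : 0 ≤ a := by positivity
      have haμ : a * μ < 1/2 := by
        rw [ha, div_mul_eq_mul_div, div_lt_iff₀ hden]; nlinarith
      have hcm1 : cm (sc a q.1) = a * μ := cm_sc ha0 (by linarith)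
      unfold phiMap
      rw [hcm1]
      rw [if_pos (by linarith : a * μ ≤ (1:ℝ)/2)]
      refine Prod.ext ?_ rfl
      show sc _ (sc a q.1) = q.1
      rw [sc_sc ha0 (by linarith) (by linarith) (by nlinarith)]
      have e2 : (2 - 3*v/2) * a = 1 := by
        rw [ha]; field_simp
        exact div_self (ne_of_gt (by linarith))
      rw [e2, sc_one]

end FibPhiPsiKey

noncomputable section FibRHLP

universe v

theorem rhlp {E B : Type u} [TopologicalSpace E] [TopologicalSpace B] {p : E → B}
    (hp : Paper.IsHurewiczFibration.{v} p) {N : ℕ}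
    (H : C((Fin N → I) × I, B)) (V : ((Fin N → I) × I) → E)
    (hVc : ContinuousOn V (LSet N))
    (hcomp : ∀ q ∈ LSet N, p (V q) = H q) :
    ∃ G : C((Fin N → I) × I, E), (∀ q, p (G q) = H q) ∧ ∀ q ∈ LSet N, G q = V q := by
  classical
  have hup : Continuous fun az : ULift.{v} (Fin N → I) × I => (az.1.down, az.2) :=
    ((continuous_uliftDown.comp continuous_fst).prodMk continuous_snd)
  let m1 : C(ULift.{v} (Fin N → I) × I, B) :=
    H.comp ⟨fun az => phiMap (az.1.down, az.2), phiMap_continuous.comp hup⟩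
  let g1 : C(ULift.{v} (Fin N → I), E) :=
    ⟨fun a => V (phiMap (a.down, 0)), by
      apply hVc.comp_continuous
      · exact phiMap_continuous.comp (continuous_uliftDown.prodMk continuous_const)
      · exact fun a => phiMap_bottom _⟩
  obtain ⟨G1, hG10, hG1p⟩ := hp _ m1 g1 (fun a => hcomp _ (phiMap_bottom _))
  have hψ : Continuous (psiMap (N := N)) := psiMap_continuous
  refine ⟨⟨fun q => G1 (ULift.up (psiMap q).1, (psiMap q).2), ?_⟩, ?_, ?_⟩
  · exact G1.continuous.comp
      (((continuous_uliftUp.comp (continuous_fst.comp hψ))).prodMk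
        (continuous_snd.comp hψ))
  · intro q
    show p (G1 (ULift.up (psiMap q).1, (psiMap q).2)) = H q
    have h1 : p (G1 (ULift.up (psiMap q).1, (psiMap q).2))
        = H (phiMap ((psiMap q).1, (psiMap q).2)) := hG1p _
    rw [h1]
    rw [show ((psiMap q).1, (psiMap q).2) = psiMap q from rfl, phi_psi]
  · intro q hq
    have h0 : (psiMap q).2 = 0 := psiMap_L hq
    show G1 (ULift.up (psiMap q).1, (psiMap q).2) = V q
    rw [h0, hG10]
    show V (phiMap ((psiMap q).1, 0)) = V q
    rw [show ((psiMap q).1, (0:I)) = psiMap q from by rw [← h0]]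
    rw [phi_psi]

/-- pasting lemma for piecewise data on a subset -/
lemma continuousOn_if_le_one {α β : Type*} [TopologicalSpace α] [TopologicalSpace β]
    {A P₁ : Set α} {g₁ g₂ : α → β} {c : α → ℝ}
    (hc : Continuous c) (h₁ : Continuous g₁) (h₂ : Continuous g₂) (hP₁ : IsClosed P₁)
    (hsub : ∀ q ∈ A, c q < 1 → q ∈ P₁)
    (hA1 : ∀ q ∈ A, c q ≤ 1)
    (hagree : ∀ q ∈ P₁, c q = 1 → g₁ q = g₂ q) :
    ContinuousOn (fun q => if 1 ≤ c q then g₂ q else g₁ q) A := by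
  classical
  intro q hq
  by_cases h1 : 1 ≤ c q
  · have hcq : c q = 1 := le_antisymm (hA1 q hq) h1
    by_cases hqP : q ∈ P₁
    · have hu : ContinuousWithinAt (fun y => if 1 ≤ c y then g₂ y else g₁ y)
          {y | 1 ≤ c y} q :=
        (h₂.continuousWithinAt).congr (fun y hy => if_pos hy) (if_pos h1)
      have hv : ContinuousWithinAt (fun y => if 1 ≤ c y then g₂ y else g₁ y)
          (A ∩ {y | c y < 1}) q := by
        refine (h₁.continuousWithinAt).congr (fun y hy => if_neg (not_le.2 hy.2)) ?_
        rw [if_pos h1]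
        exact (hagree q hqP hcq).symm
      refine (hu.union hv).mono fun y hy => ?_
      rcases le_or_gt 1 (c y) with h | h
      · exact Or.inl h
      · exact Or.inr ⟨hy, h⟩
    · refine (h₂.continuousWithinAt).congr_of_eventuallyEq ?_ (if_pos h1)
      have hmem : P₁ᶜ ∈ nhds q := hP₁.isOpen_compl.mem_nhds hqP
      filter_upwards [nhdsWithin_le_nhds hmem, self_mem_nhdsWithin] with y hy hyA
      rcases le_or_gt 1 (c y) with h | h
      · rw [if_pos h]
      · exact absurd (hsub y hyA h) hy
  · have hopen : IsOpen {y | c y < 1} := isOpen_lt hc continuous_const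
    have hev : (fun y => if 1 ≤ c y then g₂ y else g₁ y) =ᶠ[nhds q] g₁ := by
      filter_upwards [hopen.mem_nhds (not_le.1 h1)] with y hy
      rw [if_neg (not_le.2 hy)]
    exact (h₁.continuousAt.congr hev.symm).continuousWithinAt

end FibRHLP

noncomputable section FibMaster

universe v1 v2

open unitInterval

/-- multiplication in the unit interval -/
def mulI (a b : I) : I :=
  ⟨(a : ℝ) * b, mul_nonneg a.2.1 b.2.1, mul_le_one₀ a.2.2 b.2.1 b.2.2⟩

lemma mulI_one (a : I) : mulI a 1 = a := Subtype.ext (by simp [mulI])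
lemma mulI_zero (a : I) : mulI a 0 = 0 := Subtype.ext (by simp [mulI])
lemma one_mulI (a : I) : mulI 1 a = a := Subtype.ext (by simp [mulI])
lemma zero_mulI (a : I) : mulI 0 a = 0 := Subtype.ext (by simp [mulI])

lemma mulI_continuous : Continuous fun p : I × I => mulI p.1 p.2 := by
  apply Continuous.subtype_mk
  exact (continuous_subtype_val.comp continuous_fst).mul
    (continuous_subtype_val.comp continuous_snd)

/-- projections of the (n+1)-cube -/
def bp {n : ℕ} (c : Fin (n+1) → I) : Fin n → I := fun i => c i.castSucc
def tc {n : ℕ} (c : Fin (n+1) → I) : I := c (Fin.last n)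

lemma bp_snoc {n : ℕ} (b : Fin n → I) (t : I) : bp (Fin.snoc b t) = b := by
  funext i; simp [bp, Fin.snoc_castSucc]

lemma tc_snoc {n : ℕ} (b : Fin n → I) (t : I) : tc (Fin.snoc b t) = t := by
  simp [tc, Fin.snoc_last]

lemma bp_continuous {n : ℕ} : Continuous (bp (n := n)) :=
  continuous_pi fun i => continuous_apply _

lemma tc_continuous {n : ℕ} : Continuous (tc (n := n)) := continuous_apply _

lemma snoc_continuous {n : ℕ} :
    Continuous fun q : (Fin n → I) × I => (Fin.snoc q.1 q.2 : Fin (n+1) → I) := by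
  apply continuous_pi
  intro i
  refine Fin.lastCases ?_ ?_ i
  · simpa [Fin.snoc_last] using (continuous_snd :
      Continuous fun q : (Fin n → I) × I => q.2)
  · intro j
    simp only [Fin.snoc_castSucc]; exact ((continuous_apply j).comp
      (continuous_fst : Continuous fun q : (Fin n → I) × I => q.1))

lemma snoc_mem_boundary_of_base {n : ℕ} {b : Fin n → I} (h : b ∈ Cube.boundary (Fin n)) (t : I) :
    (Fin.snoc b t : Fin (n+1) → I) ∈ Cube.boundary (Fin (n+1)) := by
  obtain ⟨i, hi⟩ := h
  exact ⟨i.castSucc, by rwa [Fin.snoc_castSucc]⟩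

lemma snoc_mem_boundary_of_end {n : ℕ} (b : Fin n → I) {t : I} (h : t = 0 ∨ t = 1) :
    (Fin.snoc b t : Fin (n+1) → I) ∈ Cube.boundary (Fin (n+1)) :=
  ⟨Fin.last n, by rwa [Fin.snoc_last]⟩

lemma boundary_succ_cases {n : ℕ} {c : Fin (n+1) → I} (h : c ∈ Cube.boundary (Fin (n+1))) :
    (tc c = 0 ∨ tc c = 1) ∨ bp c ∈ Cube.boundary (Fin n) := by
  obtain ⟨i, hi⟩ := h
  refine Fin.lastCases ?_ ?_ i hi
  · intro h'; exact Or.inl h'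
  · intro j h'; exact Or.inr ⟨j, h'⟩

set_option maxHeartbeats 1000000 in
theorem masterDeform {W X Y Z : Type u} [TopologicalSpace W] [TopologicalSpace X]
    [TopologicalSpace Y] [TopologicalSpace Z]
    (pY : C(Y, W)) (pZ : C(Z, W)) (f : C(X, Z)) (g : C(Y, Z))
    (hg : ∀ y, pZ (g y) = pY y)
    (hpY : Paper.IsHurewiczFibration.{v1} ⇑pY) (hpZ : Paper.IsHurewiczFibration.{v2} ⇑pZ)
    (n : ℕ)
    (γ : C((Fin n → I), {q : X × C(I, Z) × Y // q.2.1 0 = f q.1 ∧ q.2.1 1 = g q.2.2}))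
    (hγ : ∀ b ∈ Cube.boundary (Fin n), ∀ t : I, pZ ((γ b).1.2.1 t) = pZ ((γ b).1.2.1 0)) :
    ∃ Γ : C((Fin n → I) × I, {q : X × C(I, Z) × Y // q.2.1 0 = f q.1 ∧ q.2.1 1 = g q.2.2}),
      (∀ b, Γ (b, 0) = γ b) ∧
      (∀ b ∈ Cube.boundary (Fin n), ∀ s, Γ (b, s) = γ b) ∧
      (∀ b, ∀ t : I, pZ ((Γ (b, 1)).1.2.1 t) = pZ ((Γ (b, 1)).1.2.1 0)) := by
  classical
  set xf : (Fin n → I) → X := fun b => (γ b).1.1 with hxf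
  set pp : (Fin n → I) → C(I, Z) := fun b => (γ b).1.2.1 with hpp
  set yf : (Fin n → I) → Y := fun b => (γ b).1.2.2 with hyf
  have hsubval : Continuous fun b => (γ b).1 := continuous_subtype_val.comp γ.continuous
  have hxfc : Continuous xf := continuous_fst.comp hsubval
  have hppc : Continuous pp := continuous_fst.comp (continuous_snd.comp hsubval)
  have hyfc : Continuous yf := continuous_snd.comp (continuous_snd.comp hsubval)
  have hevc : Continuous fun q : (Fin n → I) × I => pp q.1 q.2 :=
    ContinuousEval.continuous_eval.comp ((hppc.comp continuous_fst).prodMk continuous_snd)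
  have hpp0 : ∀ b, pp b 0 = f (xf b) := fun b => (γ b).2.1
  have hpp1 : ∀ b, pp b 1 = g (yf b) := fun b => (γ b).2.2
  -- Step 1 : lift on the Y side
  let HY : C((Fin n → I) × I, W) :=
    ⟨fun q => pZ (pp q.1 (σ q.2)),
      pZ.continuous.comp (hevc.comp (continuous_fst.prodMk
        (continuous_symm.comp continuous_snd)))⟩
  obtain ⟨GY, hGYp, hGYL⟩ := rhlp hpY HY (fun q => yf q.1)
    ((hyfc.comp continuous_fst).continuousOn)
    (by
      rintro ⟨b, s⟩ (hs | hb)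
      · show pY (yf b) = pZ (pp b (σ s))
        have hs' : s = 0 := hs
        rw [hs', symm_zero, ← hg, hpp1]
      · show pY (yf b) = pZ (pp b (σ s))
        rw [← hg, ← hpp1, hγ b hb 1, hγ b hb (σ s)])
  -- Step 2 : lift on the Z side over the (n+1)-cube
  let HP : C((Fin (n+1) → I) × I, W) :=
    ⟨fun q => pZ (pp (bp q.1) (mulI (tc q.1) (σ q.2))),
      pZ.continuous.comp (hevc.comp
        (((bp_continuous.comp continuous_fst)).prodMk
          (mulI_continuous.comp ((tc_continuous.comp continuous_fst).prodMk
            (continuous_symm.comp continuous_snd)))))⟩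
  set VP : ((Fin (n+1) → I) × I) → Z :=
    fun q => if 1 ≤ ((tc q.1 : ℝ)) then g (GY (bp q.1, q.2)) else pp (bp q.1) (tc q.1)
    with hVP
  have hVPg1 : Continuous fun q : ((Fin (n+1) → I) × I) => pp (bp q.1) (tc q.1) :=
    hevc.comp ((bp_continuous.comp continuous_fst).prodMk (tc_continuous.comp continuous_fst))
  have hVPg2 : Continuous fun q : ((Fin (n+1) → I) × I) => g (GY (bp q.1, q.2)) :=
    g.continuous.comp (GY.continuous.comp
      ((bp_continuous.comp continuous_fst).prodMk continuous_snd))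
  have hVPcont : ContinuousOn VP (LSet (n+1)) := by
    rw [hVP]
    apply continuousOn_if_le_one
      (c := fun q : ((Fin (n+1) → I) × I) => ((tc q.1 : ℝ)))
      (P₁ := {q : ((Fin (n+1) → I) × I) | q.2 = 0 ∨ ((tc q.1 : ℝ) = 0 ∨ cm (bp q.1) = 1)})
    · exact continuous_subtype_val.comp (tc_continuous.comp continuous_fst)
    · exact hVPg1
    · exact hVPg2
    · refine IsClosed.union ?_ (IsClosed.union ?_ ?_)
      · exact isClosed_eq continuous_snd continuous_const
      · exact isClosed_eq (continuous_subtype_val.comp (tc_continuous.comp continuous_fst))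
          continuous_const
      · exact isClosed_eq (cm_continuous.comp (bp_continuous.comp continuous_fst))
          continuous_const
    · rintro q (hs | hb) hlt
      · exact Or.inl hs
      · rcases boundary_succ_cases hb with (h0 | h1) | hbb
        · exact Or.inr (Or.inl (by rw [h0]; rfl))
        · exfalso; rw [h1] at hlt; exact absurd hlt (by norm_num)
        · exact Or.inr (Or.inr ((mem_boundary_iff_cm _).1 hbb))
    · exact fun q _ => (tc q.1).2.2
    · rintro q (hs | (h0 | hcm)) hone
      · have htc : tc q.1 = 1 := Subtype.ext hone
        have hq2 : q.2 = 0 := hs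
        rw [htc, hq2, hpp1]
        congr 1
        exact (hGYL (bp q.1, 0) (Or.inl rfl)).symm
      · exfalso; rw [h0] at hone; norm_num at hone
      · have htc : tc q.1 = 1 := Subtype.ext hone
        have hbb : bp q.1 ∈ Cube.boundary (Fin n) := (mem_boundary_iff_cm _).2 hcm
        rw [htc, hpp1]
        congr 1
        exact (hGYL (bp q.1, q.2) (Or.inr hbb)).symm
  obtain ⟨GP, hGPp, hGPL⟩ := rhlp hpZ HP VP hVPcont
    (by
      rintro ⟨c, s⟩ (hs | hbd)
      · have hs' : s = 0 := hs
        show pZ (VP (c, s)) = pZ (pp (bp c) (mulI (tc c) (σ s)))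
        rw [hs', symm_zero, mulI_one, hVP]; beta_reduce
        by_cases h1 : 1 ≤ ((tc c : ℝ))
        · rw [if_pos h1]
          have htc : tc c = 1 := Subtype.ext (le_antisymm (tc c).2.2 h1)
          rw [show GY (bp c, (0:I)) = yf (bp c) from hGYL _ (Or.inl rfl), ← hpp1, htc]
        · rw [if_neg h1]
      · show pZ (VP (c, s)) = pZ (pp (bp c) (mulI (tc c) (σ s)))
        rcases boundary_succ_cases hbd with (h0 | h1) | hbb
        · rw [hVP]; beta_reduce
          have : ¬ (1 ≤ ((tc c : ℝ))) := by rw [h0]; norm_num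
          rw [if_neg this, h0, zero_mulI]
        · rw [hVP]; beta_reduce
          have : (1 : ℝ) ≤ ((tc c : ℝ)) := by rw [h1]; exact le_of_eq rfl
          rw [if_pos this, h1, one_mulI]
          have := hGYp (bp c, s)
          rw [hg]
          exact this
        · rw [hVP]; beta_reduce
          by_cases h1 : 1 ≤ ((tc c : ℝ))
          · rw [if_pos h1]
            rw [show GY (bp c, s) = yf (bp c) from hGYL _ (Or.inr hbb), ← hpp1]
            rw [hγ _ hbb 1, hγ _ hbb (mulI (tc c) (σ s))]
          · rw [if_neg h1]
            rw [hγ _ hbb (tc c), hγ _ hbb (mulI (tc c) (σ s))])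
  -- assemble
  let sm : C(((Fin n → I) × I) × I, Z) :=
    GP.comp ⟨fun w => ((Fin.snoc w.1.1 w.2 : Fin (n+1) → I), w.1.2),
      (snoc_continuous.comp ((continuous_fst.comp continuous_fst).prodMk
        continuous_snd)).prodMk (continuous_snd.comp continuous_fst)⟩
  let cur : C((Fin n → I) × I, C(I, Z)) := sm.curry
  have hcur : ∀ q : (Fin n → I) × I, ∀ t : I, cur q t = GP ((Fin.snoc q.1 t : Fin (n+1) → I), q.2) :=
    fun q t => rfl
  have hsnoc0 : ∀ (b : Fin n → I) (s : I),
      ((Fin.snoc b (0:I) : Fin (n+1) → I), s) ∈ LSet (n+1) :=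
    fun b s => Or.inr (snoc_mem_boundary_of_end b (Or.inl rfl))
  have hsnoc1 : ∀ (b : Fin n → I) (s : I),
      ((Fin.snoc b (1:I) : Fin (n+1) → I), s) ∈ LSet (n+1) :=
    fun b s => Or.inr (snoc_mem_boundary_of_end b (Or.inr rfl))
  have hcur0 : ∀ q : (Fin n → I) × I, cur q 0 = f (xf q.1) := by
    intro q
    rw [hcur, hGPL _ (hsnoc0 q.1 q.2), hVP]; beta_reduce
    have h0 : ¬ (1 ≤ ((tc (Fin.snoc q.1 (0:I)) : ℝ))) := by rw [tc_snoc]; norm_num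
    rw [if_neg h0]
    simp only [bp_snoc, tc_snoc]
    exact hpp0 q.1
  have hcur1 : ∀ q : (Fin n → I) × I, cur q 1 = g (GY q) := by
    intro q
    rw [hcur, hGPL _ (hsnoc1 q.1 q.2), hVP]; beta_reduce
    have h1 : (1:ℝ) ≤ ((tc (Fin.snoc q.1 (1:I)) : ℝ)) := by
      rw [tc_snoc]; exact le_of_eq rfl
    rw [if_pos h1]
    simp only [bp_snoc]
  refine ⟨⟨fun q => ⟨(xf q.1, cur q, GY q), hcur0 q, by rw [hcur1]⟩, ?_⟩, ?_, ?_, ?_⟩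
  · apply Continuous.subtype_mk
    exact (hxfc.comp continuous_fst).prodMk (cur.continuous.prodMk GY.continuous)
  · -- at s = 0
    intro b
    apply Subtype.ext
    show (xf b, cur (b, 0), GY (b, 0)) = (γ b).1
    have hGY0 : GY (b, 0) = yf b := hGYL _ (Or.inl rfl)
    have hc0 : cur (b, 0) = pp b := by
      apply ContinuousMap.ext
      intro t
      rw [hcur, hGPL _ (Or.inl rfl), hVP]; beta_reduce
      by_cases h1 : 1 ≤ ((tc (Fin.snoc b t) : ℝ))
      · rw [if_pos h1]
        have ht : t = 1 := by
          rw [tc_snoc] at h1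
          exact Subtype.ext (le_antisymm t.2.2 h1)
        rw [bp_snoc, show GY (b, (0:I)) = yf b from hGY0, ← hpp1, ht]
      · rw [if_neg h1, bp_snoc, tc_snoc]
    rw [hGY0, hc0]
  · -- stationarity on the boundary
    intro b hb s
    apply Subtype.ext
    show (xf b, cur (b, s), GY (b, s)) = (γ b).1
    have hGYb : GY (b, s) = yf b := hGYL _ (Or.inr hb)
    have hcb : cur (b, s) = pp b := by
      apply ContinuousMap.ext
      intro t
      rw [hcur, hGPL _ (Or.inr (snoc_mem_boundary_of_base hb t)), hVP]; beta_reduce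
      by_cases h1 : 1 ≤ ((tc (Fin.snoc b t) : ℝ))
      · rw [if_pos h1]
        have ht : t = 1 := by
          rw [tc_snoc] at h1
          exact Subtype.ext (le_antisymm t.2.2 h1)
        rw [bp_snoc, show GY (b, s) = yf b from hGYb, ← hpp1, ht]
      · rw [if_neg h1, bp_snoc, tc_snoc]
    rw [hGYb, hcb]
  · -- fiberwise at s = 1
    intro b t
    show pZ (cur (b, 1) t) = pZ (cur (b, 1) 0)
    have hval : ∀ u : I, pZ (cur (b, 1) u) = pZ (pp b 0) := by
      intro u
      rw [hcur]
      have := hGPp ((Fin.snoc b u : Fin (n+1) → I), 1)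
      rw [this]
      show pZ (pp (bp (Fin.snoc b u)) (mulI (tc (Fin.snoc b u)) (σ 1))) = pZ (pp b 0)
      rw [symm_one, mulI_zero, bp_snoc]
    rw [hval t, hval 0]

end FibMaster

open Paper unitInterval

set_option maxHeartbeats 1000000

/-- For a cospan `X → Z ← Y` of spaces over `W` whose structure maps `Y → W` and `Z → W`
are Hurewicz fibrations, the inclusion of the fiberwise homotopy pullback (triples whose
path lies over a constant path in `W`) into the ordinary homotopy pullback is a weak
homotopy equivalence. -/
theorem fiberwiseHomotopyPullback_inclusion_weakEquiv
    {W X Y Z : Type u} [TopologicalSpace W] [TopologicalSpace X] [TopologicalSpace Y]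
    [TopologicalSpace Z]
    (pX : C(X, W)) (pY : C(Y, W)) (pZ : C(Z, W)) (f : C(X, Z)) (g : C(Y, Z))
    (hf : ∀ x, pZ (f x) = pX x) (hg : ∀ y, pZ (g y) = pY y)
    (hpY : Paper.IsHurewiczFibration ⇑pY) (hpZ : Paper.IsHurewiczFibration ⇑pZ) :
    Paper.IsWeakHomotopyEquiv
      (fun q : {q : {q : X × C(I, Z) × Y // q.2.1 0 = f q.1 ∧ q.2.1 1 = g q.2.2} //
          ∀ t : I, pZ (q.1.2.1 t) = pZ (q.1.2.1 0)} => q.1) := by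
  classical
  set EE := {q : X × C(I, Z) × Y // q.2.1 0 = f q.1 ∧ q.2.1 1 = g q.2.2} with hEE
  refine ⟨continuous_subtype_val, ⟨?_, ?_⟩, fun n x => ⟨?_, ?_⟩⟩
  · -- π₀ injectivity
    intro a b hab
    induction a using Quotient.inductionOn with | h xa => ?_
    induction b using Quotient.inductionOn with | h xb => ?_
    have hJ : Joined xa.1 xb.1 := Quotient.exact hab
    obtain ⟨P⟩ := hJ
    let γ1 : C((Fin 1 → I), EE) := ⟨fun c => P (c 0), P.continuous.comp (continuous_apply 0)⟩
    have hγ1 : ∀ c ∈ Cube.boundary (Fin 1), ∀ t : I,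
        pZ ((γ1 c).1.2.1 t) = pZ ((γ1 c).1.2.1 0) := by
      rintro c ⟨i, hi | hi⟩ t
      · have hi0 : c 0 = 0 := by rwa [Subsingleton.elim (0 : Fin 1) i]
        have : γ1 c = xa.1 := by show P (c 0) = xa.1; rw [hi0, P.source]
        rw [this]; exact xa.2 t
      · have hi0 : c 0 = 1 := by rwa [Subsingleton.elim (0 : Fin 1) i]
        have : γ1 c = xb.1 := by show P (c 0) = xb.1; rw [hi0, P.target]
        rw [this]; exact xb.2 t
    obtain ⟨Γ, h0, hstat, hfib⟩ := masterDeform pY pZ f g hg hpY hpZ 1 γ1 hγ1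
    refine Quotient.sound ⟨⟨⟨fun u => ⟨Γ ((fun _ => u), 1), hfib _⟩, ?_⟩, ?_, ?_⟩⟩
    · apply Continuous.subtype_mk
      exact Γ.continuous.comp ((continuous_pi fun _ => continuous_id).prodMk continuous_const)
    · apply Subtype.ext
      have hbd : (fun _ : Fin 1 => (0:I)) ∈ Cube.boundary (Fin 1) := ⟨0, Or.inl rfl⟩
      show (Γ ((fun _ => 0), 1) : EE) = xa.1
      rw [hstat _ hbd 1]
      show P ((0:I)) = xa.1
      exact P.source
    · apply Subtype.ext
      have hbd : (fun _ : Fin 1 => (1:I)) ∈ Cube.boundary (Fin 1) := ⟨0, Or.inr rfl⟩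
      show (Γ ((fun _ => 1), 1) : EE) = xb.1
      rw [hstat _ hbd 1]
      show P ((1:I)) = xb.1
      exact P.target
  · -- π₀ surjectivity
    intro cls
    induction cls using Quotient.inductionOn with | h e => ?_
    let γ0 : C((Fin 0 → I), EE) := ContinuousMap.const _ e
    have hγ0 : ∀ c ∈ Cube.boundary (Fin 0), ∀ t : I,
        pZ ((γ0 c).1.2.1 t) = pZ ((γ0 c).1.2.1 0) := by
      rintro c ⟨i, -⟩; exact i.elim0
    obtain ⟨Γ, h0, hstat, hfib⟩ := masterDeform pY pZ f g hg hpY hpZ 0 γ0 hγ0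
    let d : Fin 0 → I := fun i => i.elim0
    refine ⟨⟦⟨Γ (d, 1), hfib d⟩⟧, ?_⟩
    apply Quotient.sound
    refine ⟨?_⟩
    refine (⟨⟨fun u => Γ (d, u), Γ.continuous.comp (continuous_const.prodMk continuous_id)⟩,
      ?_, rfl⟩ : Path _ _).symm
    show Γ (d, 0) = e
    rw [h0 d]
    rfl
  · -- πₙ injectivity
    intro a b hab
    induction a using Quotient.inductionOn with | h la => ?_
    induction b using Quotient.inductionOn with | h lb => ?_
    have hrel : GenLoop.Homotopic (genLoopMap ⟨_, continuous_subtype_val⟩ la)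
        (genLoopMap ⟨_, continuous_subtype_val⟩ lb) := Quotient.exact hab
    obtain ⟨K⟩ := hrel
    let γK : C((Fin (n+1) → I), EE) :=
      ⟨fun c => K (tc c, bp c), K.continuous.comp (tc_continuous.prodMk bp_continuous)⟩
    have hγK : ∀ c ∈ Cube.boundary (Fin (n+1)), ∀ t : I,
        pZ ((γK c).1.2.1 t) = pZ ((γK c).1.2.1 0) := by
      intro c hc t
      show pZ ((K (tc c, bp c)).1.2.1 t) = pZ ((K (tc c, bp c)).1.2.1 0)
      rcases boundary_succ_cases hc with (h0' | h1') | hbb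
      · rw [h0', K.apply_zero]
        exact (la (bp c)).2 t
      · rw [h1', K.apply_one]
        exact (lb (bp c)).2 t
      · rw [K.eq_fst (tc c) hbb]
        exact (la (bp c)).2 t
    obtain ⟨Γ, h0, hstat, hfib⟩ := masterDeform pY pZ f g hg hpY hpZ (n+1) γK hγK
    apply Quotient.sound
    refine ⟨⟨⟨⟨fun p => ⟨Γ ((Fin.snoc p.2 p.1 : Fin (n+1) → I), 1), hfib _⟩, ?_⟩, ?_, ?_⟩, ?_⟩⟩
    · apply Continuous.subtype_mk
      exact Γ.continuous.comp ((snoc_continuous.comp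
        (continuous_snd.prodMk continuous_fst)).prodMk continuous_const)
    · -- map_zero_left
      intro y
      apply Subtype.ext
      show (Γ ((Fin.snoc y (0:I) : Fin (n+1) → I), 1) : EE) = (la y).1
      rw [hstat _ (snoc_mem_boundary_of_end y (Or.inl rfl)) 1]
      show K (tc (Fin.snoc y (0:I)), bp (Fin.snoc y (0:I))) = (la y).1
      rw [tc_snoc, bp_snoc]
      exact K.apply_zero y
    · -- map_one_left
      intro y
      apply Subtype.ext
      show (Γ ((Fin.snoc y (1:I) : Fin (n+1) → I), 1) : EE) = (lb y).1
      rw [hstat _ (snoc_mem_boundary_of_end y (Or.inr rfl)) 1]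
      show K (tc (Fin.snoc y (1:I)), bp (Fin.snoc y (1:I))) = (lb y).1
      rw [tc_snoc, bp_snoc]
      exact K.apply_one y
    · -- prop'
      intro t y hy
      apply Subtype.ext
      show (Γ ((Fin.snoc y t : Fin (n+1) → I), 1) : EE) = ((la.1 : C(_,_)) y).1
      rw [hstat _ (snoc_mem_boundary_of_base hy t) 1]
      show K (tc (Fin.snoc y t), bp (Fin.snoc y t)) = (la y).1
      rw [tc_snoc, bp_snoc]
      exact K.eq_fst t hy
  · -- πₙ surjectivity
    intro cls
    induction cls using Quotient.inductionOn with | h lE => ?_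
    have hbase : ∀ c ∈ Cube.boundary (Fin n), lE.1 c = x.1 := lE.2
    have hγE : ∀ c ∈ Cube.boundary (Fin n), ∀ t : I,
        pZ ((lE.1 c).1.2.1 t) = pZ ((lE.1 c).1.2.1 0) := by
      intro c hc t
      rw [hbase c hc]
      exact x.2 t
    obtain ⟨Γ, h0, hstat, hfib⟩ := masterDeform pY pZ f g hg hpY hpZ n lE.1 hγE
    refine ⟨⟦⟨⟨fun b => ⟨Γ (b, 1), hfib b⟩, ?_⟩, ?_⟩⟧, ?_⟩
    · apply Continuous.subtype_mk
      exact Γ.continuous.comp (continuous_id.prodMk continuous_const)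
    · intro y hy
      apply Subtype.ext
      show (Γ (y, 1) : EE) = x.1
      rw [hstat _ hy 1]
      exact hbase y hy
    · apply Quotient.sound
      apply GenLoop.Homotopic.symm
      refine ⟨⟨⟨⟨fun p => Γ (p.2, p.1), Γ.continuous.comp
        (continuous_snd.prodMk continuous_fst)⟩, ?_, ?_⟩, ?_⟩⟩
      · intro y
        exact h0 y
      · intro y
        rfl
      · intro t y hy
        show Γ (y, t) = lE.1 y
        exact hstat y hy t
end
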